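/- arXiv:math/0502232 — 12 statements merged into one kernel-verified Lean document; each statement's English description precedes it below -/
import Mathlib

section
/- For every α ∈ [0,1], the sequence p_α^U defined by p_α^U(0) = 1 - α and p_α^U(k) = ∫₀^α (1 - α + t)(1 - e^{-t})^{k-1} dt for k ≥ 1 satisfies ∑_{k=0}^∞ p_α^U(k) = 1, i.e., it is a probability distribution on ℕ. -/
open Real MeasureTheory

/-- The limiting distribution `p_α^U` of the number of occupied cells encountered
in a random unsuccessful search sums to 1, i.e. it is a probability distribution on ℕ. -/
theorem stmt_0 (α : ℝ) (hα : α ∈ Set.Icc (0:ℝ) 1) (p : ℕ → ℝ)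
    (h0 : p 0 = 1 - α)
    (hk : ∀ k : ℕ, 1 ≤ k →
      p k = ∫ t in (0:ℝ)..α, (1 - α + t) * (1 - Real.exp (-t)) ^ (k - 1)) :
    ∑' k : ℕ, p k = 1 := by
  obtain ⟨hα0, hα1⟩ := hα
  set r : ℝ := 1 - Real.exp (-α) with hr
  have hr0 : 0 ≤ r := by
    have : Real.exp (-α) ≤ 1 := Real.exp_le_one_iff.2 (by linarith)
    linarith
  have hr1 : r < 1 := by
    have : 0 < Real.exp (-α) := Real.exp_pos _
    simp only [hr]; linarith
  set f : ℕ → ℝ → ℝ := fun k t => (1 - α + t) * (1 - Real.exp (-t)) ^ k with hf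
  have hcont : ∀ k, Continuous (f k) := by
    intro k
    exact (continuous_const.add continuous_id).mul
      ((continuous_const.sub ((continuous_neg).rexp)).pow k)
  have hint : ∀ k, IntegrableOn (f k) (Set.Ioc 0 α) volume := fun k =>
    (hcont k).integrableOn_Ioc
  -- pointwise bound on Ioc 0 α
  have hbound : ∀ k, ∀ t ∈ Set.Ioc (0:ℝ) α, ‖f k t‖ ≤ r ^ k := by
    intro k t ht
    obtain ⟨ht0, htα⟩ := ht
    have h1 : 0 ≤ 1 - α + t := by linarith
    have h2 : 1 - α + t ≤ 1 := by linarith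
    have h3 : 0 ≤ 1 - Real.exp (-t) := by
      have : Real.exp (-t) ≤ 1 := Real.exp_le_one_iff.2 (by linarith)
      linarith
    have h4 : 1 - Real.exp (-t) ≤ r := by
      have : Real.exp (-α) ≤ Real.exp (-t) := Real.exp_le_exp.2 (by linarith)
      simp only [hr]; linarith
    have hnn : 0 ≤ f k t := mul_nonneg h1 (pow_nonneg h3 k)
    rw [Real.norm_of_nonneg hnn]
    calc (1 - α + t) * (1 - Real.exp (-t)) ^ k ≤ 1 * r ^ k := by
          exact mul_le_mul h2 (pow_le_pow_left₀ h3 h4 k) (pow_nonneg h3 k) zero_le_one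
      _ = r ^ k := one_mul _
  -- the integral of the norm is bounded by α * r ^ k
  have hIbound : ∀ k, ∫ t in Set.Ioc (0:ℝ) α, ‖f k t‖ ≤ α * r ^ k := by
    intro k
    have h1 : ∫ t in Set.Ioc (0:ℝ) α, ‖f k t‖ ≤ ∫ _t in Set.Ioc (0:ℝ) α, r ^ k := by
      apply setIntegral_mono_on (hint k).norm (integrableOn_const (by
        rw [Real.volume_Ioc]; exact ENNReal.ofReal_ne_top)) measurableSet_Ioc
      exact hbound k
    have h2 : ∫ _t in Set.Ioc (0:ℝ) α, r ^ k = α * r ^ k := by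
      rw [setIntegral_const, Real.volume_real_Ioc_of_le hα0,
        sub_zero, smul_eq_mul]
    linarith
  have hInn : ∀ k, 0 ≤ ∫ t in Set.Ioc (0:ℝ) α, ‖f k t‖ := fun k =>
    integral_nonneg fun t => norm_nonneg _
  have hsumnorm : Summable fun k => ∫ t in Set.Ioc (0:ℝ) α, ‖f k t‖ := by
    apply Summable.of_nonneg_of_le hInn hIbound
    exact (summable_geometric_of_lt_one hr0 hr1).mul_left α
  -- p (k+1) as a set integral
  have hpk : ∀ k : ℕ, p (k + 1) = ∫ t in Set.Ioc (0:ℝ) α, f k t := by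
    intro k
    rw [hk (k + 1) (Nat.le_add_left 1 k), intervalIntegral.integral_of_le hα0]
    simp [hf]
  -- summability of p
  have hsum1 : Summable fun k => p (k + 1) := by
    apply Summable.of_norm
    apply Summable.of_nonneg_of_le (fun k => norm_nonneg _) _ hsumnorm
    intro k
    rw [hpk k]
    exact norm_integral_le_integral_norm _
  have hsump : Summable p := (summable_nat_add_iff 1).1 hsum1
  -- swap sum and integral
  have hswap : ∑' k, p (k + 1) = ∫ t in Set.Ioc (0:ℝ) α, ∑' k, f k t := by
    simp_rw [hpk]
    exact integral_tsum_of_summable_integral_norm hint hsumnorm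
  -- compute the inner sum
  have hinner : ∀ t ∈ Set.Ioc (0:ℝ) α, ∑' k, f k t = (1 - α + t) * Real.exp t := by
    intro t ht
    have h3 : 0 ≤ 1 - Real.exp (-t) := by
      have : Real.exp (-t) ≤ 1 := Real.exp_le_one_iff.2 (by linarith [ht.1])
      linarith
    have h4 : 1 - Real.exp (-t) < 1 := by
      have : 0 < Real.exp (-t) := Real.exp_pos _
      linarith
    simp only [hf]
    rw [tsum_mul_left, tsum_geometric_of_lt_one h3 h4]
    congr 1
    rw [sub_sub_cancel, ← Real.exp_neg]
    ring_nf
  -- compute the final integral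
  have hfinal : ∫ t in Set.Ioc (0:ℝ) α, (1 - α + t) * Real.exp t = α := by
    rw [← intervalIntegral.integral_of_le hα0]
    have hderiv : ∀ x ∈ Set.uIcc (0:ℝ) α,
        HasDerivAt (fun t => (t - α) * Real.exp t) ((1 - α + x) * Real.exp x) x := by
      intro x _
      have h : HasDerivAt (fun t => (t - α) * Real.exp t) (1 * Real.exp x + (x - α) * Real.exp x) x :=
        ((hasDerivAt_id x).sub_const α).mul (Real.hasDerivAt_exp x)
      convert h using 1
      ring
    rw [intervalIntegral.integral_eq_sub_of_hasDerivAt hderiv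
      (((continuous_const.add continuous_id).mul Real.continuous_exp).intervalIntegrable 0 α)]
    simp
  calc ∑' k : ℕ, p k = p 0 + ∑' k, p (k + 1) := hsump.tsum_eq_zero_add
    _ = (1 - α) + ∫ t in Set.Ioc (0:ℝ) α, ∑' k, f k t := by rw [h0, hswap]
    _ = (1 - α) + ∫ t in Set.Ioc (0:ℝ) α, (1 - α + t) * Real.exp t := by
        rw [setIntegral_congr_fun measurableSet_Ioc hinner]
    _ = (1 - α) + α := by rw [hfinal]
    _ = 1 := by ring
end

section
/- For every α ∈ (0,1], the sequence p_α^L defined by p_α^L(0) = 1 - α/2 and p_α^L(k) = α⁻¹ ∫₀^α (α - t - (α-t)²/2)(1 - e^{-t})^{k-1} dt for k ≥ 1 satisfies ∑_{k=0}^∞ p_α^L(k) = 1. -/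
open Real MeasureTheory

/-- The limiting displacement distribution `p_α^L` for late-insertion coalesced
hashing sums to 1. -/
theorem stmt_1 (α : ℝ) (hα : α ∈ Set.Ioc (0:ℝ) 1) (p : ℕ → ℝ)
    (h0 : p 0 = 1 - α / 2)
    (hk : ∀ k : ℕ, 1 ≤ k →
      p k = α⁻¹ * ∫ t in (0:ℝ)..α,
        (α - t - (α - t) ^ 2 / 2) * (1 - Real.exp (-t)) ^ (k - 1)) :
    ∑' k : ℕ, p k = 1 := by
  obtain ⟨hα0, hα1⟩ := hα
  set g : ℝ → ℝ := fun t => α - t - (α - t) ^ 2 / 2 with hgdef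
  set F : ℕ → ℝ → ℝ := fun k t => g t * (1 - Real.exp (-t)) ^ k with hFdef
  set r : ℝ := 1 - Real.exp (-α) with hrdef
  have hr0 : (0:ℝ) ≤ r := by
    have : Real.exp (-α) ≤ 1 := Real.exp_le_one_iff.mpr (by linarith)
    linarith
  have hr1 : r < 1 := by
    have : 0 < Real.exp (-α) := Real.exp_pos _
    simp only [hrdef]; linarith
  have hrt0 : ∀ t ∈ Set.Ioc (0:ℝ) α, 0 ≤ 1 - Real.exp (-t) := by
    intro t ht
    have : Real.exp (-t) ≤ 1 := Real.exp_le_one_iff.mpr (by linarith [ht.1])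
    linarith
  have hrt1 : ∀ t ∈ Set.Ioc (0:ℝ) α, 1 - Real.exp (-t) < 1 := by
    intro t ht
    have : 0 < Real.exp (-t) := Real.exp_pos _
    linarith
  have hrtle : ∀ t ∈ Set.Ioc (0:ℝ) α, 1 - Real.exp (-t) ≤ r := by
    intro t ht
    have : Real.exp (-α) ≤ Real.exp (-t) := Real.exp_le_exp.mpr (by linarith [ht.2])
    simp only [hrdef]; linarith
  have hg0 : ∀ t ∈ Set.Ioc (0:ℝ) α, 0 ≤ g t := by
    intro t ht
    have h1 : 0 ≤ α - t := by linarith [ht.2]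
    have h2 : α - t ≤ 1 := by linarith [ht.1]
    simp only [hgdef]
    nlinarith
  have hg1 : ∀ t ∈ Set.Ioc (0:ℝ) α, g t ≤ 1 := by
    intro t ht
    have h2 : α - t ≤ 1 := by linarith [ht.1]
    simp only [hgdef]
    nlinarith [sq_nonneg (α - t)]
  have hFcont : ∀ k, Continuous (F k) := by
    intro k
    simp only [hFdef, hgdef]
    fun_prop
  have hFint : ∀ k, Integrable (F k) (volume.restrict (Set.Ioc 0 α)) :=
    fun k => (hFcont k).integrableOn_Ioc
  have hbound : ∀ k, ∀ t ∈ Set.Ioc (0:ℝ) α, ‖F k t‖ ≤ r ^ k := by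
    intro k t ht
    have h1 : 0 ≤ (1 - Real.exp (-t)) ^ k := pow_nonneg (hrt0 t ht) k
    have h2 : (1 - Real.exp (-t)) ^ k ≤ r ^ k :=
      pow_le_pow_left₀ (hrt0 t ht) (hrtle t ht) k
    have h3 : 0 ≤ F k t := mul_nonneg (hg0 t ht) h1
    rw [Real.norm_of_nonneg h3]
    calc F k t = g t * (1 - Real.exp (-t)) ^ k := rfl
      _ ≤ 1 * (r ^ k) := by
          apply mul_le_mul (hg1 t ht) h2 h1 zero_le_one
      _ = r ^ k := one_mul _
  have hnormint : ∀ k, (∫ t in Set.Ioc (0:ℝ) α, ‖F k t‖) ≤ r ^ k * α := by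
    intro k
    have hnn : 0 ≤ ∫ t in Set.Ioc (0:ℝ) α, ‖F k t‖ :=
      integral_nonneg fun t => norm_nonneg _
    have := norm_setIntegral_le_of_norm_le_const (C := r ^ k)
      (s := Set.Ioc (0:ℝ) α) (f := fun t => ‖F k t‖) (μ := volume)
      measure_Ioc_lt_top
      (fun x hx => by rw [norm_norm]; exact hbound k x hx)
    rw [Real.norm_of_nonneg hnn] at this
    calc (∫ t in Set.Ioc (0:ℝ) α, ‖F k t‖)
        ≤ r ^ k * (volume (Set.Ioc (0:ℝ) α)).toReal := this
      _ = r ^ k * α := by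
          rw [Real.volume_Ioc, ENNReal.toReal_ofReal (by linarith)]
          ring
  have hSummableNorm : Summable fun k => ∫ t in Set.Ioc (0:ℝ) α, ‖F k t‖ := by
    apply Summable.of_nonneg_of_le
      (fun k => integral_nonneg fun t => norm_nonneg _) hnormint
    exact (summable_geometric_of_lt_one hr0 hr1).mul_right α
  have hswap : (∫ t in Set.Ioc (0:ℝ) α, ∑' k, F k t)
      = ∑' k, ∫ t in Set.Ioc (0:ℝ) α, F k t :=
    (integral_tsum_of_summable_integral_norm hFint hSummableNorm).symm
  have hptwise : Set.EqOn (fun t => ∑' k, F k t) (fun t => g t * Real.exp t)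
      (Set.Ioc (0:ℝ) α) := by
    intro t ht
    simp only [hFdef]
    rw [tsum_mul_left, tsum_geometric_of_lt_one (hrt0 t ht) (hrt1 t ht)]
    have : (1 - (1 - Real.exp (-t)))⁻¹ = Real.exp t := by
      rw [sub_sub_cancel, Real.exp_neg, inv_inv]
    rw [this]
  have hderiv : ∀ t ∈ Set.uIcc (0:ℝ) α,
      HasDerivAt (fun s => -((α - s) ^ 2 / 2) * Real.exp s) (g t * Real.exp t) t := by
    intro t _
    have h1 : HasDerivAt (fun s : ℝ => α - s) (-1) t :=
      (hasDerivAt_id t).const_sub α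
    have h2 := h1.fun_pow 2
    have h3 : HasDerivAt (fun s => -((α - s) ^ 2 / 2) * Real.exp s) _ t := ((h2.div_const 2).fun_neg).fun_mul (Real.hasDerivAt_exp t)
    convert h3 using 1
    simp only [hgdef, pow_one, Nat.cast_ofNat]
    ring
  have hIoc : (∫ t in Set.Ioc (0:ℝ) α, g t * Real.exp t) = α ^ 2 / 2 := by
    rw [← intervalIntegral.integral_of_le hα0.le]
    rw [intervalIntegral.integral_eq_sub_of_hasDerivAt hderiv
      (((by simp only [hgdef]; fun_prop : Continuous fun t => g t * Real.exp t)).intervalIntegrable 0 α)]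
    simp [Real.exp_zero]
  have hk' : ∀ k : ℕ, p (k + 1) = α⁻¹ * ∫ t in Set.Ioc (0:ℝ) α, F k t := by
    intro k
    rw [hk (k + 1) (by omega), intervalIntegral.integral_of_le hα0.le]
    simp only [Nat.add_sub_cancel, hFdef, hgdef]
  have htsum : (∑' k, ∫ t in Set.Ioc (0:ℝ) α, F k t) = α ^ 2 / 2 := by
    rw [← hswap, setIntegral_congr_fun measurableSet_Ioc hptwise, hIoc]
  have hSummableF : Summable fun k => ∫ t in Set.Ioc (0:ℝ) α, F k t :=
    Summable.of_norm_bounded hSummableNorm fun k => norm_integral_le_integral_norm _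
  have hs1 : HasSum (fun k => ∫ t in Set.Ioc (0:ℝ) α, F k t) (α ^ 2 / 2) :=
    htsum ▸ hSummableF.hasSum
  have hs2 : HasSum (fun k => p (k + 1)) (α / 2) := by
    have h := hs1.mul_left α⁻¹
    have heq : (fun k => α⁻¹ * ∫ t in Set.Ioc (0:ℝ) α, F k t) = fun k => p (k + 1) := by
      funext k; rw [hk' k]
    rw [heq] at h
    have : α⁻¹ * (α ^ 2 / 2) = α / 2 := by
      field_simp
    rwa [this] at h
  have hs3 : HasSum p (α / 2 + ∑ i ∈ Finset.range 1, p i) :=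
    (hasSum_nat_add_iff 1).mp hs2
  rw [hs3.tsum_eq]
  simp [h0]
end

section
/- For every α ∈ (0,1], the sequence p_α^E defined by p_α^E(0) = 1 - α/2 and p_α^E(k) = α⁻¹ ∫₀^α (α - t) e^{-t} (1 - e^{-t})^{k-1} dt for k ≥ 1 satisfies ∑_{k=0}^∞ p_α^E(k) = 1. -/
open Real Filter

/-- The limiting displacement distribution `p_α^E` for early-insertion coalesced
hashing sums to 1. -/
theorem stmt_2 (α : ℝ) (hα : α ∈ Set.Ioc (0:ℝ) 1) (p : ℕ → ℝ)
    (h0 : p 0 = 1 - α / 2)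
    (hk : ∀ k : ℕ, 1 ≤ k →
      p k = α⁻¹ * ∫ t in (0:ℝ)..α,
        (α - t) * Real.exp (-t) * (1 - Real.exp (-t)) ^ (k - 1)) :
    ∑' k : ℕ, p k = 1 := by
  obtain ⟨hα0, hα1⟩ := hα
  set c : ℝ := 1 - Real.exp (-α) with hc
  have hexp1 : Real.exp (-α) ≤ 1 := by
    calc Real.exp (-α) ≤ Real.exp 0 := Real.exp_le_exp.mpr (by linarith)
      _ = 1 := Real.exp_zero
  have hc0 : 0 ≤ c := by simp [hc]; linarith
  have hc1 : c < 1 := by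
    have := Real.exp_pos (-α); simp [hc]; linarith
  -- continuity and integrability
  have hcont : ∀ n : ℕ, Continuous
      (fun t : ℝ => (α - t) * Real.exp (-t) * (1 - Real.exp (-t)) ^ n) := by
    intro n; continuity
  have hint : ∀ n : ℕ, IntervalIntegrable
      (fun t : ℝ => (α - t) * Real.exp (-t) * (1 - Real.exp (-t)) ^ n)
      MeasureTheory.volume 0 α := fun n => (hcont n).intervalIntegrable 0 α
  have hcontR : ∀ n : ℕ, Continuous
      (fun t : ℝ => (α - t) * (1 - Real.exp (-t)) ^ n) := by
    intro n; continuity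
  have hintR : ∀ n : ℕ, IntervalIntegrable
      (fun t : ℝ => (α - t) * (1 - Real.exp (-t)) ^ n)
      MeasureTheory.volume 0 α := fun n => (hcontR n).intervalIntegrable 0 α
  set R : ℕ → ℝ := fun n => ∫ t in (0:ℝ)..α, (α - t) * (1 - Real.exp (-t)) ^ n
    with hR
  -- pointwise facts on [0, α]
  have hpt : ∀ t ∈ Set.Icc (0:ℝ) α, 0 ≤ 1 - Real.exp (-t) ∧ 1 - Real.exp (-t) ≤ c := by
    intro t ht
    constructor
    · have : Real.exp (-t) ≤ Real.exp 0 := Real.exp_le_exp.mpr (by linarith [ht.1])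
      rw [Real.exp_zero] at this; linarith
    · have : Real.exp (-α) ≤ Real.exp (-t) := Real.exp_le_exp.mpr (by linarith [ht.2])
      simp only [hc]; linarith
  -- key partial sum formula
  have hIα : (∫ t in (0:ℝ)..α, (α - t)) = α ^ 2 / 2 := by
    have h1 : IntervalIntegrable (fun _ : ℝ => α) MeasureTheory.volume 0 α :=
      intervalIntegrable_const
    have h2 : IntervalIntegrable (fun t : ℝ => t) MeasureTheory.volume 0 α :=
      continuous_id.intervalIntegrable 0 α
    rw [intervalIntegral.integral_sub h1 h2, intervalIntegral.integral_const,
      integral_id]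
    simp
    ring
  have key : ∀ n : ℕ, ∑ i ∈ Finset.range (n + 1), p i = 1 - α⁻¹ * R n := by
    intro n
    rw [Finset.sum_range_succ']
    have h1 : ∀ i ∈ Finset.range n, p (i + 1) =
        α⁻¹ * ∫ t in (0:ℝ)..α, (α - t) * Real.exp (-t) * (1 - Real.exp (-t)) ^ i := by
      intro i _
      rw [hk (i + 1) (Nat.le_add_left 1 i)]
      simp
    rw [Finset.sum_congr rfl h1, ← Finset.mul_sum,
      ← intervalIntegral.integral_finset_sum (fun i _ => hint i)]
    have h2 : (∫ t in (0:ℝ)..α,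
        ∑ i ∈ Finset.range n, (α - t) * Real.exp (-t) * (1 - Real.exp (-t)) ^ i)
        = (∫ t in (0:ℝ)..α, ((α - t) - (α - t) * (1 - Real.exp (-t)) ^ n)) := by
      apply intervalIntegral.integral_congr
      intro t _
      have g := geom_sum_mul (1 - Real.exp (-t)) n
      dsimp only
      calc ∑ i ∈ Finset.range n, (α - t) * Real.exp (-t) * (1 - Real.exp (-t)) ^ i
          = (α - t) * Real.exp (-t) * ∑ i ∈ Finset.range n, (1 - Real.exp (-t)) ^ i := by
            rw [Finset.mul_sum]
        _ = (α - t) - (α - t) * (1 - Real.exp (-t)) ^ n := by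
            linear_combination (-(α - t)) * g
    have h3 : (∫ t in (0:ℝ)..α, ((α - t) - (α - t) * (1 - Real.exp (-t)) ^ n))
        = α ^ 2 / 2 - R n := by
      rw [intervalIntegral.integral_sub (f := fun t => α - t) ((continuous_const.sub continuous_id').intervalIntegrable 0 α) (hintR n), hIα]
    rw [h2, h3, h0]
    have hαne : α ≠ 0 := ne_of_gt hα0
    field_simp
    ring
  -- bounds on R
  have hRnonneg : ∀ n : ℕ, 0 ≤ R n := by
    intro n
    apply intervalIntegral.integral_nonneg hα0.le
    intro t ht
    exact mul_nonneg (by linarith [ht.2]) (pow_nonneg (hpt t ht).1 n)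
  have hRle : ∀ n : ℕ, R n ≤ α ^ 2 * c ^ n := by
    intro n
    have h1 : R n ≤ ∫ _t in (0:ℝ)..α, α * c ^ n := by
      apply intervalIntegral.integral_mono_on hα0.le (hintR n) intervalIntegrable_const
      intro t ht
      exact mul_le_mul (by linarith [ht.1]) (pow_le_pow_left₀ (hpt t ht).1 (hpt t ht).2 n)
        (pow_nonneg (hpt t ht).1 n) hα0.le
    rw [intervalIntegral.integral_const] at h1
    simp at h1
    calc R n ≤ α * (α * c ^ n) := h1
      _ = α ^ 2 * c ^ n := by ring
  have hR0 : Tendsto R atTop (nhds 0) := by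
    have hT : Tendsto (fun n : ℕ => α ^ 2 * c ^ n) atTop (nhds 0) := by
      have := (tendsto_pow_atTop_nhds_zero_of_lt_one hc0 hc1).const_mul (α ^ 2)
      simpa using this
    exact squeeze_zero hRnonneg hRle hT
  have hlim : Tendsto (fun n : ℕ => ∑ i ∈ Finset.range (n + 1), p i) atTop (nhds 1) := by
    have : Tendsto (fun n : ℕ => 1 - α⁻¹ * R n) atTop (nhds 1) := by
      have h := (tendsto_const_nhds : Filter.Tendsto (fun _ : ℕ => (1:ℝ)) atTop (nhds 1)).sub
        (hR0.const_mul α⁻¹)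
      simpa using h
    simpa only [key] using this
  -- nonnegativity and summability
  have hpnonneg : ∀ k : ℕ, 0 ≤ p k := by
    intro k
    cases k with
    | zero => rw [h0]; linarith
    | succ m =>
      rw [hk (m + 1) (Nat.le_add_left 1 m)]
      apply mul_nonneg (inv_nonneg.mpr hα0.le)
      apply intervalIntegral.integral_nonneg hα0.le
      intro t ht
      exact mul_nonneg (mul_nonneg (by linarith [ht.2]) (Real.exp_pos (-t)).le)
        (pow_nonneg (hpt t ht).1 _)
  have hbound : ∀ n : ℕ, ∑ i ∈ Finset.range n, p i ≤ 1 := by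
    intro n
    cases n with
    | zero => simp
    | succ m =>
      rw [key m]
      have := mul_nonneg (inv_nonneg.mpr hα0.le) (hRnonneg m)
      linarith
  have hsum : Summable p := summable_of_sum_range_le hpnonneg hbound
  have h1 := hsum.hasSum.tendsto_sum_nat
  have h2 : Tendsto (fun n : ℕ => ∑ i ∈ Finset.range (n + 1), p i) atTop
      (nhds (∑' k : ℕ, p k)) := h1.comp (tendsto_add_atTop_nat 1)
  exact tendsto_nhds_unique h2 hlim
end

section
/- Let α ∈ [0,1]. If D is a random variable on ℕ with P(D = 0) = 1 - α and P(D = k) = ∫₀^α (1 - α + t)(1 - e^{-t})^{k-1} dt for k ≥ 1, then E[D] = (e^{2α} - 1)/4 + α/2. -/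
open Real MeasureTheory

/-- `∑' n, (n+1) x^n = 1/(1-x)^2` for `0 ≤ x < 1`. -/
lemma aux_tsum_succ_geom {x : ℝ} (h0 : 0 ≤ x) (h1 : x < 1) :
    ∑' n : ℕ, ((n : ℝ) + 1) * x ^ n = 1 / (1 - x) ^ 2 := by
  have hx : ‖x‖ < 1 := by rwa [Real.norm_of_nonneg h0]
  have s1 : Summable fun n : ℕ => (n : ℝ) * x ^ n := by
    simpa using summable_pow_mul_geometric_of_norm_lt_one 1 hx
  have s2 : Summable fun n : ℕ => x ^ n := summable_geometric_of_norm_lt_one hx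
  have hne : (1 : ℝ) - x ≠ 0 := by linarith
  have : ∑' n : ℕ, ((n : ℝ) + 1) * x ^ n
      = (∑' n : ℕ, (n : ℝ) * x ^ n) + ∑' n : ℕ, x ^ n := by
    rw [← Summable.tsum_add s1 s2]
    exact tsum_congr fun n => by ring
  rw [this, tsum_coe_mul_geometric_of_norm_lt_one hx, tsum_geometric_of_norm_lt_one hx]
  field_simp
  ring

/-- The mean of the limiting distribution `D_α^U` of the number of occupied cells
encountered in a random unsuccessful search: `E[D] = (e^{2α}-1)/4 + α/2`. -/
theorem stmt_3 (α : ℝ) (hα : α ∈ Set.Icc (0:ℝ) 1)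
    (μ : Measure ℕ) [IsProbabilityMeasure μ]
    (h0 : (μ {0}).toReal = 1 - α)
    (hk : ∀ k : ℕ, 1 ≤ k →
      (μ {k}).toReal = ∫ t in (0:ℝ)..α, (1 - α + t) * (1 - Real.exp (-t)) ^ (k - 1)) :
    ∫ k, (k : ℝ) ∂μ = (Real.exp (2 * α) - 1) / 4 + α / 2 := by
  obtain ⟨hα0, hα1⟩ := hα
  set q : ℝ := 1 - Real.exp (-α) with hqdef
  have hexp1 : Real.exp (-α) ≤ 1 := by
    calc Real.exp (-α) ≤ Real.exp 0 := Real.exp_le_exp.mpr (by linarith)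
    _ = 1 := Real.exp_zero
  have hq0 : 0 ≤ q := by simp only [hqdef]; linarith
  have hq1 : q < 1 := by have := Real.exp_pos (-α); simp only [hqdef]; linarith
  -- the family of integrands
  set f : ℕ → ℝ → ℝ := fun n t => ((n : ℝ) + 1) * ((1 - α + t) * (1 - Real.exp (-t)) ^ n)
    with hfdef
  have hcont : ∀ n : ℕ, Continuous (f n) := by
    intro n
    apply Continuous.mul continuous_const
    exact ((continuous_const.add continuous_id).mul
      ((continuous_const.sub (Real.continuous_exp.comp continuous_neg)).pow n))
  have hfint : ∀ n : ℕ, Integrable (f n) (volume.restrict (Set.Ioc (0:ℝ) α)) :=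
    fun n => (hcont n).integrableOn_Ioc
  -- pointwise bound on `Icc 0 α`
  have hfnonneg : ∀ n : ℕ, ∀ t ∈ Set.Icc (0:ℝ) α, 0 ≤ f n t := by
    intro n t ht
    obtain ⟨ht0, htα⟩ := ht
    have h1 : 0 ≤ 1 - α + t := by linarith
    have h2 : 0 ≤ 1 - Real.exp (-t) := by
      have : Real.exp (-t) ≤ 1 := by
        calc Real.exp (-t) ≤ Real.exp 0 := Real.exp_le_exp.mpr (by linarith)
        _ = 1 := Real.exp_zero
      linarith
    have : (0:ℝ) ≤ (n : ℝ) + 1 := by positivity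
    exact mul_nonneg this (mul_nonneg h1 (pow_nonneg h2 n))
  have hfle : ∀ n : ℕ, ∀ t ∈ Set.Icc (0:ℝ) α, f n t ≤ ((n : ℝ) + 1) * q ^ n := by
    intro n t ht
    obtain ⟨ht0, htα⟩ := ht
    have h1 : 1 - α + t ≤ 1 := by linarith
    have h1' : 0 ≤ 1 - α + t := by linarith
    have h2 : 0 ≤ 1 - Real.exp (-t) := by
      have : Real.exp (-t) ≤ 1 := by
        calc Real.exp (-t) ≤ Real.exp 0 := Real.exp_le_exp.mpr (by linarith)
        _ = 1 := Real.exp_zero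
      linarith
    have h3 : 1 - Real.exp (-t) ≤ q := by
      simp only [hqdef]
      have : Real.exp (-α) ≤ Real.exp (-t) := Real.exp_le_exp.mpr (by linarith)
      linarith
    have hmul : (1 - α + t) * (1 - Real.exp (-t)) ^ n ≤ 1 * q ^ n := by
      apply mul_le_mul h1 (pow_le_pow_left₀ h2 h3 n) (pow_nonneg h2 n) zero_le_one
    have hn1 : (0:ℝ) ≤ (n : ℝ) + 1 := by positivity
    calc f n t ≤ ((n : ℝ) + 1) * (1 * q ^ n) :=
      mul_le_mul_of_nonneg_left hmul hn1
    _ = ((n : ℝ) + 1) * q ^ n := by ring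
  -- bound on the integrals
  have hIci : ∀ n : ℕ, ∫ t in Set.Ioc (0:ℝ) α, ‖f n t‖
      ≤ (((n : ℝ) + 1) * q ^ n) * α := by
    intro n
    have h1 : ∫ t in Set.Ioc (0:ℝ) α, ‖f n t‖
        ≤ ∫ _ in Set.Ioc (0:ℝ) α, ((n : ℝ) + 1) * q ^ n := by
      apply setIntegral_mono_on (hfint n).norm ((integrableOn_const_iff).mpr (Or.inr (by
        rw [Real.volume_Ioc]; exact ENNReal.ofReal_lt_top))) measurableSet_Ioc
      intro t ht
      have ht' := Set.Ioc_subset_Icc_self ht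
      rw [Real.norm_of_nonneg (hfnonneg n t ht')]
      exact hfle n t ht'
    have h2 : ∫ _ in Set.Ioc (0:ℝ) α, ((n : ℝ) + 1) * q ^ n
        = (((n : ℝ) + 1) * q ^ n) * α := by
      rw [setIntegral_const, Real.volume_real_Ioc_of_le hα0, smul_eq_mul]
      rw [sub_zero]
      ring
    linarith
  -- summability of the bounding sequence
  have hBsum : Summable fun n : ℕ => (((n : ℝ) + 1) * q ^ n) * α := by
    have hq : ‖q‖ < 1 := by rwa [Real.norm_of_nonneg hq0]
    have s1 : Summable fun n : ℕ => (n : ℝ) * q ^ n := by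
      simpa using summable_pow_mul_geometric_of_norm_lt_one 1 hq
    have s2 : Summable fun n : ℕ => q ^ n := summable_geometric_of_norm_lt_one hq
    exact ((s1.add s2).mul_right α).congr fun n => by ring
  -- summability of integrals of norms
  have hNsum : Summable fun n : ℕ => ∫ t in Set.Ioc (0:ℝ) α, ‖f n t‖ :=
    Summable.of_nonneg_of_le
      (fun n => integral_nonneg fun t => norm_nonneg _) hIci hBsum
  -- express μ {n+1} via set integrals
  have hμval : ∀ n : ℕ, (μ {n + 1}).toReal * ((n : ℝ) + 1)
      = ∫ t in Set.Ioc (0:ℝ) α, f n t := by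
    intro n
    have := hk (n + 1) (by omega)
    simp only [Nat.add_sub_cancel] at this
    rw [this, ← intervalIntegral.integral_of_le hα0, mul_comm,
      ← intervalIntegral.integral_const_mul]
  -- summability of k ↦ (μ {k}).toReal * k
  set g : ℕ → ℝ := fun k => (μ {k}).toReal * k with hgdef
  have hg_shift : ∀ n : ℕ, g (n + 1) = ∫ t in Set.Ioc (0:ℝ) α, f n t := by
    intro n
    simp only [hgdef]
    rw [← hμval n]
    push_cast
    ring
  have hg_shift_le : ∀ n : ℕ, g (n + 1) ≤ (((n : ℝ) + 1) * q ^ n) * α := by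
    intro n
    rw [hg_shift n]
    calc ∫ t in Set.Ioc (0:ℝ) α, f n t ≤ ∫ t in Set.Ioc (0:ℝ) α, ‖f n t‖ :=
      integral_mono (hfint n) (hfint n).norm fun t => le_abs_self _
    _ ≤ (((n : ℝ) + 1) * q ^ n) * α := hIci n
  have hg_nonneg : ∀ k : ℕ, 0 ≤ g k := by
    intro k
    exact mul_nonneg ENNReal.toReal_nonneg (Nat.cast_nonneg k)
  have hg_sum : Summable g := by
    rw [← summable_nat_add_iff 1]
    exact Summable.of_nonneg_of_le (fun n => hg_nonneg (n + 1)) hg_shift_le hBsum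
  -- integrability of k ↦ (k : ℝ)
  have hInt : Integrable (fun k : ℕ => (k : ℝ)) μ := by
    refine ⟨(measurable_from_top).aestronglyMeasurable, ?_⟩
    have hlint : (∫⁻ k, ‖(k : ℝ)‖ₑ ∂μ) = ∑' k : ℕ, ENNReal.ofReal (g k) := by
      rw [lintegral_countable']
      refine tsum_congr fun k => ?_
      rw [Real.enorm_eq_ofReal (Nat.cast_nonneg k),
        ← ENNReal.ofReal_toReal (measure_ne_top μ {k}),
        ← ENNReal.ofReal_mul (Nat.cast_nonneg k)]
      simp only [hgdef]
      rw [mul_comm]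
    rw [HasFiniteIntegral, hlint,
      ← ENNReal.ofReal_tsum_of_nonneg hg_nonneg hg_sum]
    exact ENNReal.ofReal_lt_top
  -- expectation as a sum
  rw [integral_countable' hInt]
  have hE : ∑' k : ℕ, μ.real {k} • (k : ℝ) = ∑' k : ℕ, g k :=
    tsum_congr fun k => by simp [hgdef, measureReal_def]
  rw [hE, Summable.tsum_eq_zero_add hg_sum]
  have hg0 : g 0 = 0 := by simp [hgdef]
  rw [hg0, zero_add]
  have hshift : ∑' n : ℕ, g (n + 1) = ∑' n : ℕ, ∫ t in Set.Ioc (0:ℝ) α, f n t :=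
    tsum_congr hg_shift
  rw [hshift]
  -- swap sum and integral
  rw [integral_tsum_of_summable_integral_norm hfint hNsum]
  -- evaluate the pointwise sum
  have hptw : ∀ t ∈ Set.Ioc (0:ℝ) α, (∑' n : ℕ, f n t)
      = (1 - α + t) * Real.exp (2 * t) := by
    intro t ht
    obtain ⟨ht0, htα⟩ := ht
    set x : ℝ := 1 - Real.exp (-t) with hxdef
    have hx0 : 0 ≤ x := by
      have : Real.exp (-t) ≤ 1 := by
        calc Real.exp (-t) ≤ Real.exp 0 := Real.exp_le_exp.mpr (by linarith)
        _ = 1 := Real.exp_zero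
      simp only [hxdef]; linarith
    have hx1 : x < 1 := by
      have := Real.exp_pos (-t); simp only [hxdef]; linarith
    have h1 : (∑' n : ℕ, f n t) = (1 - α + t) * ∑' n : ℕ, ((n : ℝ) + 1) * x ^ n := by
      rw [← tsum_mul_left]
      exact tsum_congr fun n => by simp only [hfdef, hxdef]; ring
    rw [h1, aux_tsum_succ_geom hx0 hx1]
    have h2 : (1 : ℝ) - x = Real.exp (-t) := by simp [hxdef]
    rw [h2]
    have h3 : Real.exp (-t) ^ 2 = Real.exp (-(2 * t)) := by
      rw [← Real.exp_nat_mul]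
      congr 1
      push_cast
      ring
    have h4 : 1 / Real.exp (-(2 * t)) = Real.exp (2 * t) := by
      rw [Real.exp_neg, one_div, inv_inv]
    rw [h3, h4]
  rw [setIntegral_congr_fun measurableSet_Ioc hptw]
  -- final integral computation via FTC
  rw [← intervalIntegral.integral_of_le hα0]
  have hderiv : ∀ t : ℝ, HasDerivAt
      (fun t : ℝ => (1 - α + t) * Real.exp (2 * t) / 2 - Real.exp (2 * t) / 4)
      ((1 - α + t) * Real.exp (2 * t)) t := by
    intro t
    have he : HasDerivAt (fun t : ℝ => Real.exp (2 * t)) (2 * Real.exp (2 * t)) t := by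
      have h := HasDerivAt.exp ((hasDerivAt_id t).const_mul 2)
      simp only [id_eq, mul_one] at h
      simpa [mul_comm] using h
    have hlin : HasDerivAt (fun t : ℝ => 1 - α + t) 1 t := by
      simpa using (hasDerivAt_id t).const_add (1 - α)
    have := ((hlin.mul he).div_const 2).sub (he.div_const 4)
    exact this.congr_deriv (by ring)
  rw [intervalIntegral.integral_eq_sub_of_hasDerivAt (fun t _ => hderiv t)
    (Continuous.intervalIntegrable (by
      exact (continuous_const.add continuous_id).mul
        (Real.continuous_exp.comp (continuous_const.mul continuous_id))) 0 α)]
  simp [Real.exp_zero]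
  ring
end

section
/- Let α ∈ (0,1]. If D is a random variable on ℕ with P(D = 0) = 1 - α/2 and P(D = k) = α⁻¹ ∫₀^α (α - t - (α-t)²/2)(1 - e^{-t})^{k-1} dt for k ≥ 1, then E[D] = (e^{2α} - 1)/(8α) + α/4 - 1/4. -/
open Real MeasureTheory

/-- Geometric-derivative series: `∑ (k+1) x^k = e^{2t}` for `x = 1-e^{-t}`, `t ≥ 0`. -/
lemma aux_hasSum (t : ℝ) (ht : 0 ≤ t) :
    HasSum (fun k : ℕ => ((k : ℝ) + 1) * (1 - Real.exp (-t)) ^ k) (Real.exp (2 * t)) := by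
  set r : ℝ := 1 - Real.exp (-t) with hr
  have hr0 : 0 ≤ r := by
    have : Real.exp (-t) ≤ 1 := Real.exp_le_one_iff.mpr (by linarith)
    simp [hr]; linarith
  have hr1 : r < 1 := by
    have := Real.exp_pos (-t); simp [hr]; linarith
  have hnorm : ‖r‖ < 1 := by rw [Real.norm_eq_abs, abs_of_nonneg hr0]; exact hr1
  have h1 : HasSum (fun k : ℕ => (k : ℝ) * r ^ k) (r / (1 - r) ^ 2) :=
    hasSum_coe_mul_geometric_of_norm_lt_one hnorm
  have h2 : HasSum (fun k : ℕ => r ^ k) (1 - r)⁻¹ := hasSum_geometric_of_norm_lt_one hnorm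
  have h3 := h1.add h2
  have he : (1 : ℝ) - r = Real.exp (-t) := by simp [hr]
  have hepos := Real.exp_pos (-t)
  have hval : r / (1 - r) ^ 2 + (1 - r)⁻¹ = Real.exp (2 * t) := by
    rw [he, show Real.exp (2 * t) = (Real.exp (-t))⁻¹ ^ 2 by
      rw [← Real.exp_neg, ← Real.exp_nat_mul]; norm_num]
    rw [hr]
    field_simp
    ring
  rw [← hval]
  convert h3 using 1
  funext k
  ring

/-- Antiderivative of `(α - t - (α-t)²/2) e^{2t}`. -/
lemma aux_hasDerivAt (α x : ℝ) :
    HasDerivAt (fun t : ℝ => (-t ^ 2 / 4 + (α / 2 - 1 / 4) * t + (α / 4 - α ^ 2 / 4 + 1 / 8)) *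
      Real.exp (2 * t))
      ((α - x - (α - x) ^ 2 / 2) * Real.exp (2 * x)) x := by
  have h1 : HasDerivAt (fun t : ℝ => -t ^ 2 / 4 + (α / 2 - 1 / 4) * t + (α / 4 - α ^ 2 / 4 + 1 / 8))
      (-(2 * x) / 4 + (α / 2 - 1 / 4)) x := by
    have hp : HasDerivAt (fun t : ℝ => t ^ 2) (2 * x) x := by simpa using hasDerivAt_pow 2 x
    simpa using
      (((hp.neg.div_const 4).add ((hasDerivAt_id x).const_mul (α / 2 - 1 / 4))).add_const
        (α / 4 - α ^ 2 / 4 + 1 / 8))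
  have he : HasDerivAt (fun t : ℝ => Real.exp (2 * t)) (2 * Real.exp (2 * x)) x := by
    simpa [Function.comp_def, mul_comm] using
      (Real.hasDerivAt_exp (2 * x)).comp x ((hasDerivAt_id x).const_mul 2)
  exact (h1.mul he).congr_deriv (by ring)

/-- Value of the key integral. -/
lemma aux_integral (α : ℝ) :
    ∫ t in (0:ℝ)..α, (α - t - (α - t) ^ 2 / 2) * Real.exp (2 * t)
      = Real.exp (2 * α) / 8 + α ^ 2 / 4 - α / 4 - 1 / 8 := by
  rw [intervalIntegral.integral_eq_sub_of_hasDerivAt (fun x _ => aux_hasDerivAt α x)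
    ((Continuous.intervalIntegrable (by continuity) 0 α))]
  norm_num [Real.exp_zero]; ring

set_option maxHeartbeats 1000000 in
/-- The mean of the limiting displacement `D_α^L` for late-insertion coalesced
hashing: `E[D] = (e^{2α}-1)/(8α) + α/4 - 1/4`. -/
theorem stmt_4 (α : ℝ) (hα : α ∈ Set.Ioc (0:ℝ) 1)
    (μ : Measure ℕ) [IsProbabilityMeasure μ]
    (h0 : (μ {0}).toReal = 1 - α / 2)
    (hk : ∀ k : ℕ, 1 ≤ k →
      (μ {k}).toReal = α⁻¹ * ∫ t in (0:ℝ)..α,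
        (α - t - (α - t) ^ 2 / 2) * (1 - Real.exp (-t)) ^ (k - 1)) :
    ∫ k, (k : ℝ) ∂μ = (Real.exp (2 * α) - 1) / (8 * α) + α / 4 - 1 / 4 := by
  obtain ⟨hα0, hα1⟩ := hα
  set g : ℝ → ℝ := fun t => α - t - (α - t) ^ 2 / 2 with hgdef
  set x : ℝ → ℝ := fun t => 1 - Real.exp (-t) with hxdef
  set r : ℝ := 1 - Real.exp (-α) with hrdef
  have hr0 : 0 ≤ r := by
    have : Real.exp (-α) ≤ 1 := Real.exp_le_one_iff.mpr (by linarith)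
    simp only [hrdef]; linarith
  have hr1 : r < 1 := by have := Real.exp_pos (-α); simp only [hrdef]; linarith
  have hnorm : ‖r‖ < 1 := by rw [Real.norm_eq_abs, abs_of_nonneg hr0]; exact hr1
  -- bounds on g and x over Icc 0 α
  have hg : ∀ t ∈ Set.Icc (0:ℝ) α, 0 ≤ g t ∧ g t ≤ α := by
    intro t ht
    obtain ⟨h1, h2⟩ := ht
    constructor <;> simp only [hgdef] <;> nlinarith
  have hx : ∀ t ∈ Set.Icc (0:ℝ) α, 0 ≤ x t ∧ x t ≤ r := by
    intro t ht
    obtain ⟨h1, h2⟩ := ht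
    constructor
    · have : Real.exp (-t) ≤ 1 := Real.exp_le_one_iff.mpr (by linarith)
      simp only [hxdef]; linarith
    · have : Real.exp (-α) ≤ Real.exp (-t) := Real.exp_le_exp.mpr (by linarith)
      simp only [hxdef, hrdef]; linarith
  -- pointwise bounds on the integrand
  have hF : ∀ (k : ℕ), ∀ t ∈ Set.Icc (0:ℝ) α,
      0 ≤ g t * x t ^ k ∧ g t * x t ^ k ≤ α * r ^ k := by
    intro k t ht
    obtain ⟨hg0, hgα⟩ := hg t ht
    obtain ⟨hx0, hxr⟩ := hx t ht
    have hpow : x t ^ k ≤ r ^ k := pow_le_pow_left₀ hx0 hxr k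
    have hpow0 : 0 ≤ x t ^ k := pow_nonneg hx0 k
    exact ⟨mul_nonneg hg0 hpow0,
      mul_le_mul hgα hpow hpow0 hα0.le⟩
  have hcont : ∀ k : ℕ, Continuous (fun t : ℝ => g t * x t ^ k) := by
    intro k; simp only [hgdef, hxdef]; continuity
  -- bound on the point masses
  have hμb : ∀ k : ℕ, (μ {k + 1}).toReal ≤ α * r ^ k := by
    intro k
    rw [hk (k + 1) (Nat.le_add_left 1 k)]
    simp only [Nat.add_sub_cancel]
    have hmono : (∫ t in (0:ℝ)..α, g t * x t ^ k) ≤ ∫ t in (0:ℝ)..α, (α * r ^ k) := by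
      apply intervalIntegral.integral_mono_on hα0.le
        ((hcont k).intervalIntegrable 0 α) (intervalIntegrable_const)
      exact fun t ht => (hF k t ht).2
    rw [intervalIntegral.integral_const] at hmono
    have hc : α⁻¹ * (∫ t in (0:ℝ)..α, g t * x t ^ k) ≤ α⁻¹ * ((α - 0) • (α * r ^ k)) :=
      mul_le_mul_of_nonneg_left hmono (by positivity)
    calc α⁻¹ * ∫ t in (0:ℝ)..α, g t * x t ^ k
        ≤ α⁻¹ * ((α - 0) • (α * r ^ k)) := hc
      _ = α * r ^ k := by rw [smul_eq_mul, sub_zero]; field_simp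
  -- summability of the geometric-derivative bound series
  have hS : Summable (fun k : ℕ => ((k : ℝ) + 1) * r ^ k) := by
    have h1 := summable_pow_mul_geometric_of_norm_lt_one 1 hnorm
    have h2 := (hasSum_geometric_of_norm_lt_one hnorm).summable
    have := h1.add h2
    apply this.congr
    intro k; simp only [pow_one]; ring
  -- integrability of the identity on ℕ
  have hlint : (∑' k : ℕ, (‖(k : ℝ)‖₊ : ENNReal) * μ {k}) ≠ ⊤ := by
    rw [tsum_eq_zero_add' ENNReal.summable]
    simp only [Nat.cast_zero, nnnorm_zero, ENNReal.coe_zero, zero_mul, zero_add]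
    have hle : (∑' k : ℕ, (‖(((k + 1 : ℕ)) : ℝ)‖₊ : ENNReal) * μ {k + 1})
        ≤ ∑' k : ℕ, ENNReal.ofReal (((k : ℝ) + 1) * (α * r ^ k)) := by
      apply ENNReal.tsum_le_tsum
      intro k
      rw [← ENNReal.ofReal_toReal (measure_ne_top μ {k + 1}),
        ← enorm_eq_nnnorm, ← ofReal_norm_eq_enorm, ← ENNReal.ofReal_mul (norm_nonneg _)]
      apply ENNReal.ofReal_le_ofReal
      have h1 : ‖(((k + 1 : ℕ)) : ℝ)‖ = (k : ℝ) + 1 := by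
        rw [Real.norm_eq_abs, abs_of_nonneg (by positivity)]; push_cast; ring
      rw [h1]
      exact mul_le_mul_of_nonneg_left (hμb k) (by positivity)
    refine ne_top_of_le_ne_top ?_ hle
    rw [← ENNReal.ofReal_tsum_of_nonneg (fun k => by positivity)]
    · exact ENNReal.ofReal_ne_top
    · apply (hS.mul_left α).congr
      intro k; ring
  have hInt : Integrable (fun k : ℕ => (k : ℝ)) μ := by
    refine ⟨measurable_from_top.aestronglyMeasurable, ?_⟩
    rw [HasFiniteIntegral, lintegral_countable']
    exact lt_top_iff_ne_top.mpr hlint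
  rw [integral_countable' hInt]
  simp only [smul_eq_mul]
  -- summability of the real series
  have hsumm : Summable (fun k : ℕ => (μ {k}).toReal * (k : ℝ)) := by
    have h := ENNReal.summable_toReal hlint
    apply h.congr
    intro k
    simp [ENNReal.toReal_mul, mul_comm]
  simp only [measureReal_def]
  rw [hsumm.tsum_eq_zero_add]
  simp only [Nat.cast_zero, mul_zero, zero_add, Nat.cast_add, Nat.cast_one]
  have key : ∀ k : ℕ, (μ {k + 1}).toReal * ((k : ℝ) + 1)
      = α⁻¹ * ∫ t in Set.Ioc (0:ℝ) α, ((k : ℝ) + 1) * (g t * x t ^ k) := by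
    intro k
    rw [hk (k + 1) (Nat.le_add_left 1 k)]
    simp only [Nat.add_sub_cancel]
    rw [← intervalIntegral.integral_of_le hα0.le, intervalIntegral.integral_const_mul]
    ring
  have hbnd : ∀ k : ℕ, (∫⁻ t in Set.Ioc (0:ℝ) α, ‖((k : ℝ) + 1) * (g t * x t ^ k)‖₊)
      ≤ ENNReal.ofReal ((((k : ℝ) + 1) * (α * r ^ k)) * α) := by
    intro k
    have hpt : ∀ t ∈ Set.Ioc (0:ℝ) α, (‖((k : ℝ) + 1) * (g t * x t ^ k)‖₊ : ENNReal)
        ≤ ENNReal.ofReal (((k : ℝ) + 1) * (α * r ^ k)) := by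
      intro t ht
      have htm : t ∈ Set.Icc (0:ℝ) α := Set.Ioc_subset_Icc_self ht
      obtain ⟨h0', h1'⟩ := hF k t htm
      rw [← enorm_eq_nnnorm, ← ofReal_norm_eq_enorm]
      apply ENNReal.ofReal_le_ofReal
      rw [Real.norm_eq_abs, abs_of_nonneg (mul_nonneg (by positivity) h0')]
      exact mul_le_mul_of_nonneg_left h1' (by positivity)
    calc (∫⁻ t in Set.Ioc (0:ℝ) α, ‖((k : ℝ) + 1) * (g t * x t ^ k)‖₊)
        ≤ ∫⁻ _ in Set.Ioc (0:ℝ) α, ENNReal.ofReal (((k : ℝ) + 1) * (α * r ^ k)) :=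
          setLIntegral_mono measurable_const hpt
      _ = ENNReal.ofReal (((k : ℝ) + 1) * (α * r ^ k)) * ENNReal.ofReal α := by
          rw [setLIntegral_const, Real.volume_Ioc]; norm_num
      _ = ENNReal.ofReal ((((k : ℝ) + 1) * (α * r ^ k)) * α) := by
          rw [← ENNReal.ofReal_mul (by positivity)]
  have hfin : (∑' k : ℕ, ∫⁻ t in Set.Ioc (0:ℝ) α, ‖((k : ℝ) + 1) * (g t * x t ^ k)‖₊) ≠ ⊤ := by
    have hsum2 : Summable (fun k : ℕ => (((k : ℝ) + 1) * (α * r ^ k)) * α) := by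
      apply ((hS.mul_left α).mul_right α).congr
      intro k; ring
    have hnn : ∀ k : ℕ, 0 ≤ (((k : ℝ) + 1) * (α * r ^ k)) * α := fun k =>
      mul_nonneg (mul_nonneg (by positivity) (mul_nonneg hα0.le (pow_nonneg hr0 k))) hα0.le
    refine ne_top_of_le_ne_top ?_ (ENNReal.tsum_le_tsum hbnd)
    rw [← ENNReal.ofReal_tsum_of_nonneg hnn hsum2]
    exact ENNReal.ofReal_ne_top
  calc ∑' k : ℕ, (μ {k + 1}).toReal * ((k : ℝ) + 1)
      = α⁻¹ * ∑' k : ℕ, ∫ t in Set.Ioc (0:ℝ) α, ((k : ℝ) + 1) * (g t * x t ^ k) := by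
        rw [← tsum_mul_left]; exact tsum_congr key
    _ = α⁻¹ * ∫ t in Set.Ioc (0:ℝ) α, ∑' k : ℕ, ((k : ℝ) + 1) * (g t * x t ^ k) := by
        congr 1
        exact (integral_tsum
          (fun k => (continuous_const.mul (hcont k)).aestronglyMeasurable) hfin).symm
    _ = α⁻¹ * ∫ t in Set.Ioc (0:ℝ) α, g t * Real.exp (2 * t) := by
        congr 1
        apply setIntegral_congr_fun measurableSet_Ioc
        intro t ht
        have h := (aux_hasSum t ht.1.le).mul_left (g t)
        have h2 : ∑' (k : ℕ), ((k : ℝ) + 1) * (g t * (1 - Real.exp (-t)) ^ k)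
            = g t * Real.exp (2 * t) := by
          rw [← h.tsum_eq]; exact tsum_congr fun k => by ring
        simpa only [hxdef] using h2
    _ = (Real.exp (2 * α) - 1) / (8 * α) + α / 4 - 1 / 4 := by
        rw [← intervalIntegral.integral_of_le hα0.le]
        simp only [hgdef]
        rw [aux_integral α]
        field_simp
        ring
end

section
/- Let α ∈ (0,1] and let D_α^E have the distribution P(D = 0) = 1 - α/2, P(D = k) = α⁻¹ ∫₀^α (α - t) e^{-t}(1 - e^{-t})^{k-1} dt for k ≥ 1. Then Var(D_α^E) = ((α-2)/2)·((e^α - 1)/α)² + 2(e^α - 1)/α - 1. -/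
open Real MeasureTheory ProbabilityTheory
open scoped NNReal ENNReal

lemma aux_hs1 {x : ℝ} (h0 : 0 ≤ x) (h1 : x < 1) :
    HasSum (fun k : ℕ => (k : ℝ) * x ^ (k - 1)) (1 / (1 - x) ^ 2) := by
  have hx : ‖x‖ < 1 := by rwa [Real.norm_eq_abs, abs_of_nonneg h0]
  have h := hasSum_choose_mul_geometric_of_norm_lt_one 1 hx
  have h' : HasSum (fun n : ℕ => ((fun k : ℕ => (k : ℝ) * x ^ (k - 1)) (n + 1)))
      (1 / (1 - x) ^ 2) := by
    refine h.congr_fun fun n => ?_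
    simp [Nat.choose_one_right]
  have := (hasSum_nat_add_iff (f := fun k : ℕ => (k : ℝ) * x ^ (k - 1)) 1).mp h'
  simpa using this

lemma aux_hs2 {x : ℝ} (h0 : 0 ≤ x) (h1 : x < 1) :
    HasSum (fun k : ℕ => (k : ℝ) ^ 2 * x ^ (k - 1)) ((1 + x) / (1 - x) ^ 3) := by
  have hx : ‖x‖ < 1 := by rwa [Real.norm_eq_abs, abs_of_nonneg h0]
  have hne : (1 : ℝ) - x ≠ 0 := by linarith
  have h2 := (hasSum_choose_mul_geometric_of_norm_lt_one 2 hx).mul_left 2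
  have h1' := hasSum_choose_mul_geometric_of_norm_lt_one 1 hx
  have hsub := h2.sub h1'
  have hchoose : ∀ n : ℕ, ((n + 2).choose 2 : ℝ) * 2 = (n + 2) * (n + 1) := by
    intro n
    have hd : 2 ∣ (n + 1) * (n + 2) := (Nat.even_mul_succ_self (n + 1)).two_dvd
    have hnat : (n + 2).choose 2 * 2 = (n + 2) * (n + 1) := by
      rw [Nat.choose_two_right, show n + 2 - 1 = n + 1 from rfl,
        Nat.div_mul_cancel (by rwa [mul_comm] at hd)]
    exact_mod_cast hnat
  have hval : 2 * (1 / (1 - x) ^ (2 + 1)) - 1 / (1 - x) ^ (1 + 1) = (1 + x) / (1 - x) ^ 3 := by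
    field_simp; ring
  have hfun : (fun n : ℕ => 2 * (((n + 2).choose 2 : ℝ) * x ^ n) - ((n + 1).choose 1 : ℝ) * x ^ n)
      = fun n : ℕ => ((n : ℝ) + 1) ^ 2 * x ^ n := by
    funext n
    rw [Nat.choose_one_right]
    have := hchoose n
    push_cast at this ⊢
    linear_combination x ^ n * this
  rw [hfun, hval] at hsub
  have h' : HasSum (fun n : ℕ => ((fun k : ℕ => (k : ℝ) ^ 2 * x ^ (k - 1)) (n + 1)))
      ((1 + x) / (1 - x) ^ 3) := by
    refine hsub.congr_fun fun n => ?_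
    push_cast
    ring_nf
  have := (hasSum_nat_add_iff (f := fun k : ℕ => (k : ℝ) ^ 2 * x ^ (k - 1)) 1).mp h'
  simpa using this

lemma aux_int1 (α : ℝ) : ∫ t in (0:ℝ)..α, (α - t) * Real.exp t = Real.exp α - α - 1 := by
  have key : ∀ t ∈ Set.uIcc (0:ℝ) α,
      HasDerivAt (fun t => (α + 1 - t) * Real.exp t) ((α - t) * Real.exp t) t := by
    intro t _
    have h : HasDerivAt (fun t : ℝ => (α + 1 - t) * Real.exp t)
        ((0 - 1) * Real.exp t + (α + 1 - t) * Real.exp t) t :=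
      (((hasDerivAt_const t (α + 1)).sub (hasDerivAt_id t)).mul (Real.hasDerivAt_exp t))
    convert h using 1; ring
  rw [intervalIntegral.integral_eq_sub_of_hasDerivAt key
    (by apply Continuous.intervalIntegrable; continuity)]
  simp only [Real.exp_zero]; ring

lemma aux_int2 (α : ℝ) : ∫ t in (0:ℝ)..α, (α - t) * (2 * Real.exp (2 * t) - Real.exp t)
    = Real.exp (2 * α) / 2 - Real.exp α + 1 / 2 := by
  have key : ∀ t ∈ Set.uIcc (0:ℝ) α,
      HasDerivAt (fun t => (α + 1/2 - t) * Real.exp (2 * t) - (α + 1 - t) * Real.exp t)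
        ((α - t) * (2 * Real.exp (2 * t) - Real.exp t)) t := by
    intro t _
    have he2 : HasDerivAt (fun t : ℝ => Real.exp (2 * t)) (2 * Real.exp (2 * t)) t := by
      simpa [mul_comm] using ((hasDerivAt_id t).const_mul 2).exp
    have h : HasDerivAt (fun t : ℝ => (α + 1/2 - t) * Real.exp (2 * t) - (α + 1 - t) * Real.exp t)
        (((0 - 1) * Real.exp (2 * t) + (α + 1/2 - t) * (2 * Real.exp (2 * t)))
          - ((0 - 1) * Real.exp t + (α + 1 - t) * Real.exp t)) t :=
      ((((hasDerivAt_const t (α + 1/2)).sub (hasDerivAt_id t)).mul he2).sub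
        (((hasDerivAt_const t (α + 1)).sub (hasDerivAt_id t)).mul (Real.hasDerivAt_exp t)))
    convert h using 1; ring
  rw [intervalIntegral.integral_eq_sub_of_hasDerivAt key
    (by apply Continuous.intervalIntegrable; continuity)]
  simp only [mul_zero, Real.exp_zero]; ring

lemma aux_interchange {α : ℝ} (hα0 : 0 < α) (w : ℕ → ℝ) (hwnn : ∀ k, 0 ≤ w k)
    (hq : Summable fun k : ℕ => w k * (1 - Real.exp (-α)) ^ (k - 1)) :
    ∑' k : ℕ, ∫ t in Set.Ioc (0:ℝ) α,
        w k * ((α - t) * Real.exp (-t) * (1 - Real.exp (-t)) ^ (k - 1))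
      = ∫ t in Set.Ioc (0:ℝ) α, ∑' k : ℕ,
        w k * ((α - t) * Real.exp (-t) * (1 - Real.exp (-t)) ^ (k - 1)) := by
  have hcont : ∀ k : ℕ, Continuous fun t : ℝ =>
      w k * ((α - t) * Real.exp (-t) * (1 - Real.exp (-t)) ^ (k - 1)) := by
    intro k; continuity
  apply integral_tsum_of_summable_integral_norm
  · intro k
    exact (hcont k).integrableOn_Ioc
  · have hsum : Summable fun k : ℕ => α * (α * (w k * (1 - Real.exp (-α)) ^ (k - 1))) :=
      (hq.mul_left α).mul_left α
    refine Summable.of_nonneg_of_le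
      (fun k => integral_nonneg fun t => norm_nonneg _) (fun k => ?_) hsum
    have hbound : ∀ t ∈ Set.Ioc (0:ℝ) α,
        ‖w k * ((α - t) * Real.exp (-t) * (1 - Real.exp (-t)) ^ (k - 1))‖
          ≤ w k * (α * 1 * (1 - Real.exp (-α)) ^ (k - 1)) := by
      intro t ht
      obtain ⟨ht0, htα⟩ := ht
      have hx0 : (0:ℝ) ≤ 1 - Real.exp (-t) := by
        have : Real.exp (-t) ≤ 1 := by
          rw [show (1:ℝ) = Real.exp 0 from (Real.exp_zero).symm]
          exact Real.exp_le_exp.2 (by linarith)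
        linarith
      have hnn : 0 ≤ w k * ((α - t) * Real.exp (-t) * (1 - Real.exp (-t)) ^ (k - 1)) :=
        mul_nonneg (hwnn k) (mul_nonneg (mul_nonneg (by linarith) (Real.exp_pos _).le)
          (pow_nonneg hx0 _))
      rw [Real.norm_of_nonneg hnn]
      have hxq : 1 - Real.exp (-t) ≤ 1 - Real.exp (-α) := by
        have : Real.exp (-α) ≤ Real.exp (-t) := Real.exp_le_exp.2 (by linarith)
        linarith
      have hea : Real.exp (-α) ≤ 1 := by
        have h1 : Real.exp (-α) ≤ Real.exp 0 := Real.exp_le_exp.2 (by linarith)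
        rwa [Real.exp_zero] at h1
      have het : Real.exp (-t) ≤ 1 := by
        have h1 : Real.exp (-t) ≤ Real.exp 0 := Real.exp_le_exp.2 (by linarith)
        rwa [Real.exp_zero] at h1
      gcongr
      all_goals first
        | exact hwnn k
        | exact pow_nonneg hx0 _
        | exact pow_le_pow_left hx0 hxq _
        | exact het
        | exact mul_nonneg (by linarith) (Real.exp_pos _).le
        | linarith
    calc ∫ t in Set.Ioc (0:ℝ) α, ‖w k * ((α - t) * Real.exp (-t) * (1 - Real.exp (-t)) ^ (k - 1))‖
        ≤ ∫ _ in Set.Ioc (0:ℝ) α, w k * (α * 1 * (1 - Real.exp (-α)) ^ (k - 1)) := by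
          refine setIntegral_mono_on ((hcont k).norm.integrableOn_Ioc)
            (integrableOn_const (measure_Ioc_lt_top).ne) measurableSet_Ioc hbound
      _ = α * (α * (w k * (1 - Real.exp (-α)) ^ (k - 1))) := by
          rw [setIntegral_const, smul_eq_mul, measureReal_def, Real.volume_Ioc, sub_zero,
            ENNReal.toReal_ofReal hα0.le]
          ring

/-- The variance of the limiting displacement `D_α^E` for early-insertion coalesced
hashing: `Var(D_α^E) = ((α-2)/2)((e^α-1)/α)² + 2(e^α-1)/α - 1`. -/
theorem stmt_6 (α : ℝ) (hα : α ∈ Set.Ioc (0:ℝ) 1)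
    (μ : Measure ℕ) [IsProbabilityMeasure μ]
    (h0 : (μ {0}).toReal = 1 - α / 2)
    (hk : ∀ k : ℕ, 1 ≤ k →
      (μ {k}).toReal = α⁻¹ * ∫ t in (0:ℝ)..α,
        (α - t) * Real.exp (-t) * (1 - Real.exp (-t)) ^ (k - 1)) :
    variance (fun k : ℕ => (k : ℝ)) μ =
      (α - 2) / 2 * ((Real.exp α - 1) / α) ^ 2 + 2 * (Real.exp α - 1) / α - 1 := by
  obtain ⟨hα0, hα1⟩ := hα
  have hαne : α ≠ 0 := hα0.ne'
  set q : ℝ := 1 - Real.exp (-α) with hqdef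
  have hea : Real.exp (-α) ≤ 1 := by
    have h1 : Real.exp (-α) ≤ Real.exp 0 := Real.exp_le_exp.2 (by linarith)
    rwa [Real.exp_zero] at h1
  have hq0 : 0 ≤ q := by rw [hqdef]; linarith
  have hq1 : q < 1 := by have := Real.exp_pos (-α); rw [hqdef]; linarith
  have Sq1 : Summable (fun k : ℕ => (k : ℝ) * q ^ (k - 1)) := (aux_hs1 hq0 hq1).summable
  have Sq2 : Summable (fun k : ℕ => (k : ℝ) ^ 2 * q ^ (k - 1)) := (aux_hs2 hq0 hq1).summable
  have hPk : ∀ k : ℕ, 1 ≤ k → (μ {k}).toReal ≤ α * q ^ (k - 1) := by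
    intro k hk1
    rw [hk k hk1]
    have hle : ∫ t in (0:ℝ)..α, (α - t) * Real.exp (-t) * (1 - Real.exp (-t)) ^ (k - 1)
        ≤ ∫ _ in (0:ℝ)..α, α * q ^ (k - 1) := by
      apply intervalIntegral.integral_mono_on hα0.le
      · apply Continuous.intervalIntegrable; continuity
      · apply intervalIntegrable_const
      · intro t ht
        obtain ⟨ht0, htα⟩ := ht
        have het : Real.exp (-t) ≤ 1 := by
          have h1 : Real.exp (-t) ≤ Real.exp 0 := Real.exp_le_exp.2 (by linarith)
          rwa [Real.exp_zero] at h1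
        have hx0 : (0:ℝ) ≤ 1 - Real.exp (-t) := by linarith
        have hxq : 1 - Real.exp (-t) ≤ q := by
          have : Real.exp (-α) ≤ Real.exp (-t) := Real.exp_le_exp.2 (by linarith)
          rw [hqdef]; linarith
        calc (α - t) * Real.exp (-t) * (1 - Real.exp (-t)) ^ (k - 1)
            ≤ α * 1 * q ^ (k - 1) := by
              gcongr
              all_goals first
                | exact pow_le_pow_left hx0 hxq _
                | exact het
                | exact (Real.exp_pos _).le
                | linarith
          _ = α * q ^ (k - 1) := by ring
    have hint : (∫ _ in (0:ℝ)..α, α * q ^ (k - 1)) = α * (α * q ^ (k - 1)) := by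
      rw [intervalIntegral.integral_const, sub_zero, smul_eq_mul]
    rw [hint] at hle
    have h2 := mul_le_mul_of_nonneg_left hle (inv_nonneg.2 hα0.le)
    calc α⁻¹ * ∫ t in (0:ℝ)..α, (α - t) * Real.exp (-t) * (1 - Real.exp (-t)) ^ (k - 1)
        ≤ α⁻¹ * (α * (α * q ^ (k - 1))) := h2
      _ = α * q ^ (k - 1) := by field_simp
  have hbsum : Summable (fun k : ℕ => (k : ℝ) ^ 2 * (α * q ^ (k - 1))) := by
    refine (Sq2.mul_left α).congr fun k => by ring
  have hIntSq : Integrable (fun k : ℕ => (k : ℝ) ^ 2) μ := by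
    constructor
    · exact (measurable_of_countable _).aestronglyMeasurable
    · rw [hasFiniteIntegral_iff_norm]
      have hcalc : ∫⁻ k : ℕ, ENNReal.ofReal ‖(k : ℝ) ^ 2‖ ∂μ
          = ∑' k : ℕ, ENNReal.ofReal ‖(k : ℝ) ^ 2‖ * μ {k} := lintegral_countable' _
      rw [hcalc]
      have hle : ∑' k : ℕ, ENNReal.ofReal ‖(k : ℝ) ^ 2‖ * μ {k}
          ≤ ∑' k : ℕ, ENNReal.ofReal ((k : ℝ) ^ 2 * (α * q ^ (k - 1))) := by
        refine ENNReal.tsum_le_tsum fun k => ?_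
        rcases Nat.eq_zero_or_pos k with rfl | hk1
        · simp
        · rw [← ENNReal.ofReal_toReal (measure_ne_top μ {k}),
            Real.norm_of_nonneg (by positivity), ← ENNReal.ofReal_mul (by positivity)]
          exact ENNReal.ofReal_le_ofReal
            (mul_le_mul_of_nonneg_left (hPk k hk1) (by positivity))
      refine lt_of_le_of_lt hle ?_
      have heq : (fun k : ℕ => ENNReal.ofReal ((k : ℝ) ^ 2 * (α * q ^ (k - 1))))
          = fun k : ℕ => ((((k : ℝ) ^ 2 * (α * q ^ (k - 1))).toNNReal : ℝ≥0) : ℝ≥0∞) := rfl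
      rw [heq, lt_top_iff_ne_top, ENNReal.tsum_coe_ne_top_iff_summable]
      rw [← NNReal.summable_coe]
      refine hbsum.congr fun k => ?_
      exact (Real.coe_toNNReal _ (by positivity)).symm
  have hmeas : AEStronglyMeasurable (fun k : ℕ => (k : ℝ)) μ :=
    (measurable_of_countable _).aestronglyMeasurable
  have hMem : MemLp (fun k : ℕ => (k : ℝ)) 2 μ :=
    (memLp_two_iff_integrable_sq hmeas).2 hIntSq
  have hInt1 : Integrable (fun k : ℕ => (k : ℝ)) μ := hMem.integrable one_le_two
  have hmom : ∀ (w : ℕ → ℝ) (S : ℝ → ℝ), w 0 = 0 → (∀ k, 0 ≤ w k) →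
      Summable (fun k : ℕ => w k * q ^ (k - 1)) →
      (∀ t ∈ Set.Ioc (0:ℝ) α, HasSum (fun k : ℕ =>
          w k * ((α - t) * Real.exp (-t) * (1 - Real.exp (-t)) ^ (k - 1))) (S t)) →
      ∑' k : ℕ, (μ {k}).toReal * w k = α⁻¹ * ∫ t in Set.Ioc (0:ℝ) α, S t := by
    intro w S hw0 hwnn hwsum hS
    have step1 : ∀ k : ℕ, (μ {k}).toReal * w k
        = α⁻¹ * ∫ t in Set.Ioc (0:ℝ) α,
            w k * ((α - t) * Real.exp (-t) * (1 - Real.exp (-t)) ^ (k - 1)) := by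
      intro k
      rcases Nat.eq_zero_or_pos k with rfl | hk1
      · simp [hw0]
      · rw [hk k hk1, intervalIntegral.integral_of_le hα0.le, MeasureTheory.integral_const_mul]
        ring
    calc ∑' k : ℕ, (μ {k}).toReal * w k
        = ∑' k : ℕ, α⁻¹ * ∫ t in Set.Ioc (0:ℝ) α,
            w k * ((α - t) * Real.exp (-t) * (1 - Real.exp (-t)) ^ (k - 1)) := tsum_congr step1
      _ = α⁻¹ * ∑' k : ℕ, ∫ t in Set.Ioc (0:ℝ) α,
            w k * ((α - t) * Real.exp (-t) * (1 - Real.exp (-t)) ^ (k - 1)) := tsum_mul_left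
      _ = α⁻¹ * ∫ t in Set.Ioc (0:ℝ) α, ∑' k : ℕ,
            w k * ((α - t) * Real.exp (-t) * (1 - Real.exp (-t)) ^ (k - 1)) := by
          rw [aux_interchange hα0 w hwnn hwsum]
      _ = α⁻¹ * ∫ t in Set.Ioc (0:ℝ) α, S t := by
          congr 1
          refine setIntegral_congr_fun measurableSet_Ioc fun t ht => ?_
          exact (hS t ht).tsum_eq
  have hS1 : ∀ t ∈ Set.Ioc (0:ℝ) α, HasSum (fun k : ℕ =>
      (k : ℝ) * ((α - t) * Real.exp (-t) * (1 - Real.exp (-t)) ^ (k - 1)))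
      ((α - t) * Real.exp t) := by
    intro t ht
    obtain ⟨ht0, htα⟩ := ht
    have het : Real.exp (-t) ≤ 1 := by
      have h1 : Real.exp (-t) ≤ Real.exp 0 := Real.exp_le_exp.2 (by linarith)
      rwa [Real.exp_zero] at h1
    have hx0 : (0:ℝ) ≤ 1 - Real.exp (-t) := by linarith
    have hx1 : 1 - Real.exp (-t) < 1 := by have := Real.exp_pos (-t); linarith
    have h := (aux_hs1 hx0 hx1).mul_left ((α - t) * Real.exp (-t))
    have hval : ((α - t) * Real.exp (-t)) * (1 / (1 - (1 - Real.exp (-t))) ^ 2)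
        = (α - t) * Real.exp t := by
      have h1 : (1 : ℝ) - (1 - Real.exp (-t)) = Real.exp (-t) := by ring
      rw [h1, Real.exp_neg]
      have he := Real.exp_ne_zero t
      field_simp
    rw [hval] at h
    exact h.congr_fun fun k => by ring
  have hS2 : ∀ t ∈ Set.Ioc (0:ℝ) α, HasSum (fun k : ℕ =>
      (k : ℝ) ^ 2 * ((α - t) * Real.exp (-t) * (1 - Real.exp (-t)) ^ (k - 1)))
      ((α - t) * (2 * Real.exp (2 * t) - Real.exp t)) := by
    intro t ht
    obtain ⟨ht0, htα⟩ := ht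
    have het : Real.exp (-t) ≤ 1 := by
      have h1 : Real.exp (-t) ≤ Real.exp 0 := Real.exp_le_exp.2 (by linarith)
      rwa [Real.exp_zero] at h1
    have hx0 : (0:ℝ) ≤ 1 - Real.exp (-t) := by linarith
    have hx1 : 1 - Real.exp (-t) < 1 := by have := Real.exp_pos (-t); linarith
    have h := (aux_hs2 hx0 hx1).mul_left ((α - t) * Real.exp (-t))
    have hval : ((α - t) * Real.exp (-t))
        * ((1 + (1 - Real.exp (-t))) / (1 - (1 - Real.exp (-t))) ^ 3)
        = (α - t) * (2 * Real.exp (2 * t) - Real.exp t) := by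
      have h1 : (1 : ℝ) - (1 - Real.exp (-t)) = Real.exp (-t) := by ring
      have h2 : Real.exp (2 * t) = Real.exp t * Real.exp t := by
        rw [← Real.exp_add]; ring_nf
      rw [h1, h2, Real.exp_neg]
      have he := Real.exp_ne_zero t
      field_simp
      ring
    rw [hval] at h
    exact h.congr_fun fun k => by ring
  have hE1 : ∫ k, (fun k : ℕ => (k : ℝ)) k ∂μ = α⁻¹ * (Real.exp α - α - 1) := by
    rw [integral_countable' hInt1]
    simp only [smul_eq_mul, measureReal_def]
    rw [hmom (fun k : ℕ => (k : ℝ)) (fun t => (α - t) * Real.exp t) (by simp)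
      (fun k => Nat.cast_nonneg k) Sq1 hS1]
    rw [← intervalIntegral.integral_of_le hα0.le, aux_int1]
  have hE2 : ∫ k, (fun k : ℕ => (k : ℝ) ^ 2) k ∂μ
      = α⁻¹ * (Real.exp (2 * α) / 2 - Real.exp α + 1 / 2) := by
    rw [integral_countable' hIntSq]
    simp only [smul_eq_mul, measureReal_def]
    rw [hmom (fun k : ℕ => (k : ℝ) ^ 2) (fun t => (α - t) * (2 * Real.exp (2 * t) - Real.exp t))
      (by simp) (fun k => by positivity) Sq2 hS2]
    rw [← intervalIntegral.integral_of_le hα0.le, aux_int2]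
  rw [variance_eq_sub hMem]
  have hXsq : ((fun k : ℕ => (k : ℝ)) ^ 2) = fun k : ℕ => (k : ℝ) ^ 2 := by
    funext k; simp [Pi.pow_apply]
  rw [show (μ[(fun k : ℕ => (k : ℝ)) ^ 2]) = ∫ k, (fun k : ℕ => (k : ℝ) ^ 2) k ∂μ by rw [hXsq]]
  rw [hE2, hE1]
  have hexp2 : Real.exp (2 * α) = Real.exp α * Real.exp α := by
    rw [← Real.exp_add]; ring_nf
  rw [hexp2]
  field_simp
  ring
end

section
/- Let α ∈ (0,1] and let D_α^U have the distribution P(D = 0) = 1 - α, P(D = k) = ∫₀^α (1 - α + t)(1 - e^{-t})^{k-1} dt for k ≥ 1. Then Var(D_α^U) = -e^{4α}/16 + (4/9)e^{3α} - (α/4 + 1/8)e^{2α} - α²/4 + 5α/12 - 37/144. -/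
open Real MeasureTheory ProbabilityTheory
open scoped ENNReal NNReal

lemma sumS1 {x : ℝ} (hx : |x| < 1) :
    ∑' n : ℕ, ((n : ℝ) + 1) * x ^ n = ((1 - x) ^ 2)⁻¹ := by
  have hx' : ‖x‖ < 1 := by rwa [Real.norm_eq_abs]
  have hne : (1 : ℝ) - x ≠ 0 := by
    have := abs_lt.1 hx; intro h; linarith [this.2]
  have hs0 : Summable (fun n : ℕ => x ^ n) := summable_geometric_of_norm_lt_one hx'
  have hs1 : Summable (fun n : ℕ => (n : ℝ) * x ^ n) := by
    simpa using summable_pow_mul_geometric_of_norm_lt_one 1 hx'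
  have : ∑' n : ℕ, ((n : ℝ) + 1) * x ^ n
      = (∑' n : ℕ, (n : ℝ) * x ^ n) + ∑' n : ℕ, x ^ n := by
    rw [← Summable.tsum_add hs1 hs0]; congr 1; ext n; ring
  rw [this, tsum_coe_mul_geometric_of_norm_lt_one hx', tsum_geometric_of_norm_lt_one hx']
  field_simp
  ring

lemma sumS2 {x : ℝ} (hx : |x| < 1) :
    ∑' n : ℕ, ((n : ℝ) + 1) ^ 2 * x ^ n = (1 + x) / (1 - x) ^ 3 := by
  have hx' : ‖x‖ < 1 := by rwa [Real.norm_eq_abs]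
  have hne : (1 : ℝ) - x ≠ 0 := by
    have := abs_lt.1 hx; intro h; linarith [this.2]
  have hs0 : Summable (fun n : ℕ => x ^ n) := summable_geometric_of_norm_lt_one hx'
  have hs1 : Summable (fun n : ℕ => (n : ℝ) * x ^ n) := by
    simpa using summable_pow_mul_geometric_of_norm_lt_one 1 hx'
  have hs2 : Summable (fun n : ℕ => (n : ℝ) ^ 2 * x ^ n) :=
    summable_pow_mul_geometric_of_norm_lt_one 2 hx'
  have hs2' : Summable (fun n : ℕ => ((n : ℝ) + 1) ^ 2 * x ^ n) := by
    have := (hs2.add ((hs1.mul_left 2).add hs0))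
    convert this using 2 with n; ring
  set T : ℝ := ∑' n : ℕ, (n : ℝ) ^ 2 * x ^ n with hT
  have hsplit : ∑' n : ℕ, ((n : ℝ) + 1) ^ 2 * x ^ n
      = T + 2 * (x / (1 - x) ^ 2) + (1 - x)⁻¹ := by
    rw [← tsum_coe_mul_geometric_of_norm_lt_one hx', ← tsum_geometric_of_norm_lt_one hx', hT]
    rw [← tsum_mul_left (a := (2:ℝ)), ← Summable.tsum_add hs2 (hs1.mul_left 2),
        ← Summable.tsum_add (hs2.add (hs1.mul_left 2)) hs0]
    congr 1; ext n; ring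
  have hTeq : T = x * (T + 2 * (x / (1 - x) ^ 2) + (1 - x)⁻¹) := by
    rw [← hsplit, hT]
    rw [Summable.tsum_eq_zero_add hs2]
    simp only [Nat.cast_zero, Nat.cast_add, Nat.cast_one, pow_zero, mul_one]
    rw [← tsum_mul_left (a := x)]
    norm_num
    congr 1; ext n; push_cast; ring
  have hTval : T = x * (1 + x) / (1 - x) ^ 3 := by
    have hmul : T * (1 - x) = x * (2 * (x / (1 - x) ^ 2) + (1 - x)⁻¹) := by
      nlinarith [hTeq]
    rw [eq_div_iff (pow_ne_zero 3 hne)]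
    have h2 : (1 - x) ^ 2 ≠ 0 := pow_ne_zero _ hne
    field_simp at hmul
    refine mul_right_cancel₀ hne ?_
    linear_combination (1 - x) * hmul
  rw [hsplit, hTval]
  field_simp
  ring

lemma xabs_lt {t : ℝ} (ht : 0 ≤ t) : |1 - Real.exp (-t)| < 1 := by
  rw [abs_lt]
  have h1 : 0 < Real.exp (-t) := Real.exp_pos _
  have h2 : Real.exp (-t) ≤ 1 := Real.exp_le_one_iff.2 (by linarith)
  constructor <;> linarith

lemma sum_exp1 {t : ℝ} (ht : 0 ≤ t) :
    ∑' n : ℕ, ((n : ℝ) + 1) * (1 - Real.exp (-t)) ^ n = Real.exp (2 * t) := by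
  rw [sumS1 (xabs_lt ht)]
  have h : (1 : ℝ) - (1 - Real.exp (-t)) = Real.exp (-t) := by ring
  rw [h, ← Real.exp_nat_mul]
  rw [← Real.exp_neg]
  norm_num

lemma sum_exp2 {t : ℝ} (ht : 0 ≤ t) :
    ∑' n : ℕ, ((n : ℝ) + 1) ^ 2 * (1 - Real.exp (-t)) ^ n
      = 2 * Real.exp (3 * t) - Real.exp (2 * t) := by
  rw [sumS2 (xabs_lt ht)]
  have h : (1 : ℝ) - (1 - Real.exp (-t)) = Real.exp (-t) := by ring
  rw [h]
  have h3 : Real.exp (-t) ^ 3 = Real.exp (-(3 * t)) := by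
    rw [← Real.exp_nat_mul]; ring_nf
  rw [h3, div_eq_iff (Real.exp_ne_zero _)]
  have e1 : Real.exp (3 * t) * Real.exp (-(3 * t)) = 1 := by
    rw [← Real.exp_add]; norm_num
  have e2 : Real.exp (2 * t) * Real.exp (-(3 * t)) = Real.exp (-t) := by
    rw [← Real.exp_add]; ring_nf
  linear_combination e2 - 2 * e1

lemma evalJ1 (α : ℝ) :
    ∫ t in (0:ℝ)..α, (1 - α + t) * Real.exp (2 * t)
      = Real.exp (2 * α) / 4 + α / 2 - 1 / 4 := by
  have hderiv : ∀ t ∈ Set.uIcc (0:ℝ) α,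
      HasDerivAt (fun t => (1 - α + t) * Real.exp (2 * t) / 2 - Real.exp (2 * t) / 4)
        ((1 - α + t) * Real.exp (2 * t)) t := by
    intro t _
    have he : HasDerivAt (fun t : ℝ => Real.exp (2 * t)) (Real.exp (2 * t) * 2) t :=
      by simpa using ((hasDerivAt_id t).const_mul 2).exp
    have h1 : HasDerivAt (fun t : ℝ => (1 - α + t)) 1 t :=
      (hasDerivAt_id t).const_add (1 - α)
    have := ((h1.mul he).div_const 2).sub (he.div_const 4)
    exact this.congr_deriv (by ring)
  have hcont : IntervalIntegrable (fun t => (1 - α + t) * Real.exp (2 * t)) volume 0 α :=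
    (Continuous.mul (by continuity) (by continuity)).intervalIntegrable _ _
  rw [intervalIntegral.integral_eq_sub_of_hasDerivAt hderiv hcont]
  simp [Real.exp_zero]
  ring

lemma evalJ2 (α : ℝ) :
    ∫ t in (0:ℝ)..α, (1 - α + t) * (2 * Real.exp (3 * t) - Real.exp (2 * t))
      = 4 * Real.exp (3 * α) / 9 - Real.exp (2 * α) / 4 - (1 - α) / 6 - 1 / 36 := by
  have hderiv : ∀ t ∈ Set.uIcc (0:ℝ) α,
      HasDerivAt (fun t => (1 - α + t) * (2 * Real.exp (3 * t) / 3 - Real.exp (2 * t) / 2)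
          - (2 * Real.exp (3 * t) / 9 - Real.exp (2 * t) / 4))
        ((1 - α + t) * (2 * Real.exp (3 * t) - Real.exp (2 * t))) t := by
    intro t _
    have he2 : HasDerivAt (fun t : ℝ => Real.exp (2 * t)) (Real.exp (2 * t) * 2) t :=
      by simpa using ((hasDerivAt_id t).const_mul 2).exp
    have he3 : HasDerivAt (fun t : ℝ => Real.exp (3 * t)) (Real.exp (3 * t) * 3) t :=
      by simpa using ((hasDerivAt_id t).const_mul 3).exp
    have h1 : HasDerivAt (fun t : ℝ => (1 - α + t)) 1 t :=
      (hasDerivAt_id t).const_add (1 - α)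
    have := (h1.mul (((he3.const_mul 2).div_const 3).sub (he2.div_const 2))).sub
      (((he3.const_mul 2).div_const 9).sub (he2.div_const 4))
    exact this.congr_deriv (by simp only [Pi.sub_apply]; ring)
  have hcont : IntervalIntegrable
      (fun t => (1 - α + t) * (2 * Real.exp (3 * t) - Real.exp (2 * t))) volume 0 α :=
    (Continuous.mul (by continuity) (by continuity)).intervalIntegrable _ _
  rw [intervalIntegral.integral_eq_sub_of_hasDerivAt hderiv hcont]
  simp [Real.exp_zero]
  ring

lemma key (α : ℝ) (hα0 : 0 < α) (hα1 : α ≤ 1) (w : ℕ → ℝ) (hw : ∀ n, 0 ≤ w n)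
    (hwb : ∀ n, w n ≤ ((n : ℝ) + 1) ^ 2) (g : ℝ → ℝ)
    (hg : ∀ t ∈ Set.Ioc (0:ℝ) α, ∑' n : ℕ, w n * (1 - Real.exp (-t)) ^ n = g t) :
    ∑' n : ℕ, w n * (∫ t in (0:ℝ)..α, (1 - α + t) * (1 - Real.exp (-t)) ^ n)
      = ∫ t in Set.Ioc (0:ℝ) α, (1 - α + t) * g t := by
  set ρ : ℝ := 1 - Real.exp (-α) with hρ
  have hρ0 : 0 ≤ ρ := by
    have : Real.exp (-α) ≤ 1 := Real.exp_le_one_iff.2 (by linarith)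
    simp [hρ]; linarith
  have hρ1 : ρ < 1 := by
    have : 0 < Real.exp (-α) := Real.exp_pos _
    simp [hρ]; linarith
  have hρn : ‖ρ‖ < 1 := by rw [Real.norm_eq_abs, abs_of_nonneg hρ0]; exact hρ1
  set F : ℕ → ℝ → ℝ := fun n t => w n * ((1 - α + t) * (1 - Real.exp (-t)) ^ n) with hF
  have hFcont : ∀ n, Continuous (F n) := by
    intro n; apply Continuous.mul continuous_const
    exact Continuous.mul (by continuity) (by continuity)
  have hFint : ∀ n, Integrable (F n) (volume.restrict (Set.Ioc (0:ℝ) α)) := fun n =>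
    (hFcont n).integrableOn_Ioc
  -- pointwise bound on Ioc
  have hFbd : ∀ n, ∀ t ∈ Set.Ioc (0:ℝ) α, ‖F n t‖ ≤ ((n : ℝ) + 1) ^ 2 * ρ ^ n := by
    intro n t ht
    obtain ⟨ht0, htα⟩ := ht
    have he1 : Real.exp (-t) ≤ 1 := Real.exp_le_one_iff.2 (by linarith)
    have he2 : Real.exp (-α) ≤ Real.exp (-t) := Real.exp_le_exp.2 (by linarith)
    have hx0 : (0:ℝ) ≤ 1 - Real.exp (-t) := by linarith
    have hxρ : 1 - Real.exp (-t) ≤ ρ := by simp [hρ]; linarith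
    have h1 : (0:ℝ) ≤ 1 - α + t := by linarith
    have h2 : 1 - α + t ≤ 1 := by linarith
    have h3 : (1 - Real.exp (-t)) ^ n ≤ ρ ^ n := pow_le_pow_left₀ hx0 hxρ n
    have hFnn : 0 ≤ F n t := by
      apply mul_nonneg (hw n) (mul_nonneg h1 (pow_nonneg hx0 n))
    rw [Real.norm_of_nonneg hFnn, hF]
    have : (1 - α + t) * (1 - Real.exp (-t)) ^ n ≤ 1 * ρ ^ n :=
      mul_le_mul h2 h3 (pow_nonneg hx0 n) one_pos.le
    calc w n * ((1 - α + t) * (1 - Real.exp (-t)) ^ n)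
        ≤ ((n : ℝ) + 1) ^ 2 * (1 * ρ ^ n) := by
          apply mul_le_mul (hwb n) this
            (mul_nonneg h1 (pow_nonneg hx0 n)) (by positivity)
      _ = ((n : ℝ) + 1) ^ 2 * ρ ^ n := by ring
  have hmeas : MeasurableSet (Set.Ioc (0:ℝ) α) := measurableSet_Ioc
  have hFsum : Summable fun n => ∫ t in Set.Ioc (0:ℝ) α, ‖F n t‖ := by
    have hb : ∀ n, ∫ t in Set.Ioc (0:ℝ) α, ‖F n t‖
        ≤ ((n : ℝ) + 1) ^ 2 * ρ ^ n * α := by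
      intro n
      have := setIntegral_mono_on (hFint n).norm
        (integrableOn_const measure_Ioc_lt_top.ne) hmeas (hFbd n)
      calc ∫ t in Set.Ioc (0:ℝ) α, ‖F n t‖
          ≤ ∫ _ in Set.Ioc (0:ℝ) α, ((n : ℝ) + 1) ^ 2 * ρ ^ n := this
        _ = ((n : ℝ) + 1) ^ 2 * ρ ^ n * α := by
            rw [setIntegral_const, measureReal_def, Real.volume_Ioc, smul_eq_mul,
              ENNReal.toReal_ofReal (by linarith)]
            ring
    have hsum : Summable fun n : ℕ => ((n : ℝ) + 1) ^ 2 * ρ ^ n * α := by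
      apply Summable.mul_right
      have h2 := summable_pow_mul_geometric_of_norm_lt_one 2 hρn
      have h1 := summable_pow_mul_geometric_of_norm_lt_one 1 hρn
      have h0 := summable_geometric_of_norm_lt_one hρn
      have := (h2.add ((by simpa using h1 : Summable fun n : ℕ => (n:ℝ) * ρ ^ n).mul_left 2)).add h0
      convert this using 2 with n; rfl; ring
    exact Summable.of_nonneg_of_le
      (fun n => integral_nonneg fun t => norm_nonneg _) hb hsum
  have hinterchange := integral_tsum_of_summable_integral_norm hFint hFsum
  have step1 : ∀ n : ℕ, w n * (∫ t in (0:ℝ)..α, (1 - α + t) * (1 - Real.exp (-t)) ^ n)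
      = ∫ t in Set.Ioc (0:ℝ) α, F n t := by
    intro n
    rw [intervalIntegral.integral_of_le hα0.le, ← integral_const_mul]
  calc ∑' n : ℕ, w n * (∫ t in (0:ℝ)..α, (1 - α + t) * (1 - Real.exp (-t)) ^ n)
      = ∑' n : ℕ, ∫ t in Set.Ioc (0:ℝ) α, F n t := by
        exact tsum_congr step1
    _ = ∫ t in Set.Ioc (0:ℝ) α, ∑' n, F n t := hinterchange
    _ = ∫ t in Set.Ioc (0:ℝ) α, (1 - α + t) * g t := by
        apply setIntegral_congr_fun hmeas
        intro t ht
        have : ∑' n, F n t = (1 - α + t) * ∑' n, w n * (1 - Real.exp (-t)) ^ n := by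
          rw [← tsum_mul_left]
          exact tsum_congr fun n => by rw [hF]; ring
        simp only []
        rw [this, hg t ht]

lemma integrable_of_summable' (μ : Measure ℕ) [IsFiniteMeasure μ] {f : ℕ → ℝ}
    (h : Summable fun n => ‖f n‖ * (μ {n}).toReal) : Integrable f μ := by
  refine ⟨measurable_from_nat.aestronglyMeasurable, ?_⟩
  have hlin : ∫⁻ a, (‖f a‖₊ : ℝ≥0∞) ∂μ = ∑' a, (‖f a‖₊ : ℝ≥0∞) * μ {a} :=
    lintegral_countable' _
  have heq : ∀ a, (‖f a‖₊ : ℝ≥0∞) * μ {a} = ENNReal.ofReal (‖f a‖ * (μ {a}).toReal) := by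
    intro a
    rw [ENNReal.ofReal_mul (norm_nonneg _), ofReal_norm,
      ENNReal.ofReal_toReal (measure_ne_top μ _)]
    rfl
  show (∫⁻ a, (‖f a‖₊ : ℝ≥0∞) ∂μ) < ⊤
  rw [hlin]
  simp_rw [heq]
  rw [← ENNReal.ofReal_tsum_of_nonneg
    (fun n => mul_nonneg (norm_nonneg _) ENNReal.toReal_nonneg) h]
  exact ENNReal.ofReal_lt_top


/-- The variance of the limiting unsuccessful-search distribution `D_α^U`:
`Var(D_α^U) = -e^{4α}/16 + (4/9)e^{3α} - (α/4+1/8)e^{2α} - α²/4 + 5α/12 - 37/144`. -/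
theorem stmt_7 (α : ℝ) (hα : α ∈ Set.Ioc (0:ℝ) 1)
    (μ : Measure ℕ) [IsProbabilityMeasure μ]
    (h0 : (μ {0}).toReal = 1 - α)
    (hk : ∀ k : ℕ, 1 ≤ k →
      (μ {k}).toReal = ∫ t in (0:ℝ)..α, (1 - α + t) * (1 - Real.exp (-t)) ^ (k - 1)) :
    variance (fun k : ℕ => (k : ℝ)) μ =
      -Real.exp (4 * α) / 16 + (4 / 9) * Real.exp (3 * α)
        - (α / 4 + 1 / 8) * Real.exp (2 * α) - α ^ 2 / 4 + 5 * α / 12 - 37 / 144 := by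
  obtain ⟨hα0, hα1⟩ := hα
  set ρ : ℝ := 1 - Real.exp (-α) with hρ
  have hρ0 : 0 ≤ ρ := by
    have : Real.exp (-α) ≤ 1 := Real.exp_le_one_iff.2 (by linarith)
    simp only [hρ]; linarith
  have hρ1 : ρ < 1 := by
    have : 0 < Real.exp (-α) := Real.exp_pos _
    simp only [hρ]; linarith
  have hρn : ‖ρ‖ < 1 := by rw [Real.norm_eq_abs, abs_of_nonneg hρ0]; exact hρ1
  have hint : ∀ n : ℕ, IntervalIntegrable
      (fun t => (1 - α + t) * (1 - Real.exp (-t)) ^ n) volume 0 α := by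
    intro n
    exact (Continuous.mul (by continuity) (by continuity)).intervalIntegrable _ _
  have hbound : ∀ n : ℕ, (μ {n + 1}).toReal ≤ α * ρ ^ n := by
    intro n
    rw [hk (n + 1) (by omega)]
    simp only [Nat.add_sub_cancel]
    have hmono : ∫ t in (0:ℝ)..α, (1 - α + t) * (1 - Real.exp (-t)) ^ n
        ≤ ∫ _ in (0:ℝ)..α, ρ ^ n := by
      apply intervalIntegral.integral_mono_on hα0.le (hint n) intervalIntegrable_const
      intro t ht
      obtain ⟨ht0, htα⟩ := ht
      have he1 : Real.exp (-t) ≤ 1 := Real.exp_le_one_iff.2 (by linarith)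
      have he2 : Real.exp (-α) ≤ Real.exp (-t) := Real.exp_le_exp.2 (by linarith)
      have hx0 : (0:ℝ) ≤ 1 - Real.exp (-t) := by linarith
      have hxρ : 1 - Real.exp (-t) ≤ ρ := by simp only [hρ]; linarith
      have h3 : (1 - Real.exp (-t)) ^ n ≤ ρ ^ n := pow_le_pow_left₀ hx0 hxρ n
      have : (1 - α + t) * (1 - Real.exp (-t)) ^ n ≤ 1 * ρ ^ n :=
        mul_le_mul (by linarith) h3 (pow_nonneg hx0 n) one_pos.le
      linarith
    have hc : ∫ _ in (0:ℝ)..α, ρ ^ n = α * ρ ^ n := by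
      rw [intervalIntegral.integral_const, smul_eq_mul]; ring_nf
    linarith
  -- summability facts
  have hsρ2 : Summable (fun n : ℕ => ((n : ℝ) + 1) ^ 2 * ρ ^ n) := by
    have h2 := summable_pow_mul_geometric_of_norm_lt_one 2 hρn
    have h1 := summable_pow_mul_geometric_of_norm_lt_one 1 hρn
    have h0' := summable_geometric_of_norm_lt_one hρn
    have := (h2.add ((by simpa using h1 : Summable fun n : ℕ => (n : ℝ) * ρ ^ n).mul_left 2)).add h0'
    convert this using 2 with n; rfl; ring
  have hsum2' : Summable (fun n : ℕ => ((n : ℝ) + 1) ^ 2 * (μ {n + 1}).toReal) := by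
    apply Summable.of_nonneg_of_le
      (fun n => mul_nonneg (by positivity) ENNReal.toReal_nonneg)
      (fun n => mul_le_mul_of_nonneg_left (hbound n) (by positivity))
    have := hsρ2.mul_left α
    convert this using 2 with n; rfl; ring
  have hsum1' : Summable (fun n : ℕ => ((n : ℝ) + 1) * (μ {n + 1}).toReal) := by
    apply Summable.of_nonneg_of_le
      (fun n => mul_nonneg (by positivity) ENNReal.toReal_nonneg)
      (fun n => ?_) hsum2'
    apply mul_le_mul_of_nonneg_right ?_ ENNReal.toReal_nonneg
    nlinarith [Nat.cast_nonneg (α := ℝ) n]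
  have hsumX : Summable (fun k : ℕ => ‖(k : ℝ)‖ * (μ {k}).toReal) := by
    apply (summable_nat_add_iff 1).mp
    convert hsum1' using 2 with n
    rfl
    push_cast
    rw [Real.norm_of_nonneg (by positivity)]
  have hsumX2 : Summable (fun k : ℕ => ‖((k : ℝ)) ^ 2‖ * (μ {k}).toReal) := by
    apply (summable_nat_add_iff 1).mp
    convert hsum2' using 2 with n
    rfl
    push_cast
    rw [Real.norm_of_nonneg (by positivity)]
  have hintX : Integrable (fun k : ℕ => (k : ℝ)) μ := integrable_of_summable' μ hsumX
  have hintX2 : Integrable (fun k : ℕ => ((k : ℝ)) ^ 2) μ := integrable_of_summable' μ hsumX2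
  -- first moment
  have hEX : ∫ k, (k : ℝ) ∂μ = Real.exp (2 * α) / 4 + α / 2 - 1 / 4 := by
    rw [integral_countable' hintX]
    simp only [smul_eq_mul, measureReal_def]
    have hsummand : Summable (fun k : ℕ => (μ {k}).toReal * (k : ℝ)) := by
      apply (summable_nat_add_iff 1).mp
      convert hsum1' using 2 with n
      rfl
      push_cast; ring
    rw [Summable.tsum_eq_zero_add hsummand]
    simp only [Nat.cast_zero, mul_zero, zero_add]
    have hrw : ∀ n : ℕ, (μ {n + 1}).toReal * ((n + 1 : ℕ) : ℝ)
        = ((n : ℝ) + 1) * ∫ t in (0:ℝ)..α, (1 - α + t) * (1 - Real.exp (-t)) ^ n := by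
      intro n
      rw [hk (n + 1) (by omega)]
      simp only [Nat.add_sub_cancel]
      push_cast; ring
    rw [tsum_congr hrw, key α hα0 hα1 (fun n => (n : ℝ) + 1)
      (fun n => by positivity)
      (fun n => by show (n : ℝ) + 1 ≤ ((n : ℝ) + 1) ^ 2
                   nlinarith [Nat.cast_nonneg (α := ℝ) n])
      (fun t => Real.exp (2 * t))
      (fun t ht => sum_exp1 ht.1.le)]
    rw [← intervalIntegral.integral_of_le hα0.le, evalJ1]
  -- second moment
  have hEX2 : ∫ k, ((k : ℝ)) ^ 2 ∂μ
      = 4 * Real.exp (3 * α) / 9 - Real.exp (2 * α) / 4 - (1 - α) / 6 - 1 / 36 := by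
    rw [integral_countable' hintX2]
    simp only [smul_eq_mul, measureReal_def]
    have hsummand : Summable (fun k : ℕ => (μ {k}).toReal * ((k : ℝ)) ^ 2) := by
      apply (summable_nat_add_iff 1).mp
      convert hsum2' using 2 with n
      rfl
      push_cast; ring
    rw [Summable.tsum_eq_zero_add hsummand]
    simp only [Nat.cast_zero, mul_zero, zero_add, zero_pow, ne_eq, OfNat.ofNat_ne_zero,
      not_false_eq_true]
    have hrw : ∀ n : ℕ, (μ {n + 1}).toReal * (((n + 1 : ℕ) : ℝ)) ^ 2
        = ((n : ℝ) + 1) ^ 2 * ∫ t in (0:ℝ)..α, (1 - α + t) * (1 - Real.exp (-t)) ^ n := by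
      intro n
      rw [hk (n + 1) (by omega)]
      simp only [Nat.add_sub_cancel]
      push_cast; ring
    rw [tsum_congr hrw, key α hα0 hα1 (fun n => ((n : ℝ) + 1) ^ 2)
      (fun n => by positivity)
      (fun n => le_refl _)
      (fun t => 2 * Real.exp (3 * t) - Real.exp (2 * t))
      (fun t ht => sum_exp2 ht.1.le)]
    rw [← intervalIntegral.integral_of_le hα0.le, evalJ2]
  -- conclude
  have hmem : MemLp (fun k : ℕ => (k : ℝ)) 2 μ :=
    (memLp_two_iff_integrable_sq measurable_from_nat.aestronglyMeasurable).2 hintX2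
  rw [variance_eq_sub hmem]
  have hμX2 : μ[(fun k : ℕ => (k : ℝ)) ^ 2] = ∫ k, ((k : ℝ)) ^ 2 ∂μ := by
    congr 1
  rw [hμX2, hEX, hEX2]
  have hC : Real.exp (2 * α) * Real.exp (2 * α) = Real.exp (4 * α) := by
    rw [← Real.exp_add]; ring_nf
  linear_combination (-(1 : ℝ) / 16) * hC
end

section
/- Fix α > 0. As k → ∞, p_α^U(k) ~ e^α k⁻¹ (1 - e^{-α})^k, where p_α^U(k) = ∫₀^α (1 - α + t)(1 - e^{-t})^{k-1} dt. -/
open Real Filter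

lemma aux_ftc (n : ℕ) (a b : ℝ) :
    ∫ t in a..b, Real.exp (-t) * (1 - Real.exp (-t)) ^ n
      = (1 - Real.exp (-b)) ^ (n+1) / (n+1) - (1 - Real.exp (-a)) ^ (n+1) / (n+1) := by
  apply intervalIntegral.integral_eq_sub_of_hasDerivAt
    (f := fun t => (1 - Real.exp (-t)) ^ (n+1) / (n+1))
  · intro t _
    have h1 : HasDerivAt (fun t : ℝ => 1 - Real.exp (-t)) (Real.exp (-t)) t := by
      simpa using ((Real.hasDerivAt_exp (-t)).comp t (hasDerivAt_id t).neg).const_sub 1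
    have h2 := (h1.pow (n+1)).div_const ((n : ℝ)+1)
    convert h2 using 1
    rfl
    rfl
    push_cast
    rw [eq_div_iff (by positivity)]
    ring
  · exact (Continuous.intervalIntegrable (by continuity) _ _)

set_option maxHeartbeats 1000000 in
/-- Asymptotics of `p_α^U`: as `k → ∞`, `p_α^U(k) ~ e^α k⁻¹ (1-e^{-α})^k`. -/
theorem stmt_12 (α : ℝ) (hα : 0 < α) (p : ℕ → ℝ)
    (hk : ∀ k : ℕ, 1 ≤ k →
      p k = ∫ t in (0:ℝ)..α, (1 - α + t) * (1 - Real.exp (-t)) ^ (k - 1)) :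
    Tendsto (fun k : ℕ =>
        p k / (Real.exp α * (k : ℝ)⁻¹ * (1 - Real.exp (-α)) ^ k))
      atTop (nhds 1) := by
  set β : ℝ := 1 - Real.exp (-α) with hβdef
  have hβ0 : 0 < β := by
    have : Real.exp (-α) < 1 := Real.exp_lt_one_iff.mpr (neg_lt_zero.mpr hα)
    simp only [hβdef]; linarith
  have hea : (0:ℝ) < Real.exp α := Real.exp_pos α
  set G : ℝ → ℝ := fun t => (1 - α + t) - Real.exp α * Real.exp (-t) with hGdef
  have hGcont : Continuous G := by continuity
  have hφcont : ∀ n : ℕ, Continuous fun t : ℝ => (1 - Real.exp (-t)) ^ n :=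
    fun n => (continuous_const.sub (Real.continuous_exp.comp continuous_neg)).pow n
  set J : ℕ → ℝ := fun k => ∫ t in (0:ℝ)..α, G t * (1 - Real.exp (-t)) ^ (k - 1) with hJdef
  clear_value β G J
  -- key identity
  have hkey : ∀ k : ℕ, 1 ≤ k → p k = J k + Real.exp α * (β ^ k / k) := by
    intro k hk1
    rw [hk k hk1, hJdef]
    have hint1 : IntervalIntegrable (fun t => G t * (1 - Real.exp (-t)) ^ (k-1))
        MeasureTheory.volume 0 α := (hGcont.mul (hφcont _)).intervalIntegrable _ _
    have hint2 : IntervalIntegrable (fun t => Real.exp α * (Real.exp (-t) * (1 - Real.exp (-t)) ^ (k-1)))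
        MeasureTheory.volume 0 α := (continuous_const.mul
          ((Real.continuous_exp.comp continuous_neg).mul (hφcont _))).intervalIntegrable _ _
    have heq : ∀ t : ℝ, (1 - α + t) * (1 - Real.exp (-t)) ^ (k - 1)
        = G t * (1 - Real.exp (-t)) ^ (k-1)
          + Real.exp α * (Real.exp (-t) * (1 - Real.exp (-t)) ^ (k-1)) := by
      intro t; simp only [hGdef]; ring
    rw [intervalIntegral.integral_congr (g := fun t => G t * (1 - Real.exp (-t)) ^ (k-1)
          + Real.exp α * (Real.exp (-t) * (1 - Real.exp (-t)) ^ (k-1))) (fun t _ => heq t),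
      intervalIntegral.integral_add hint1 hint2, intervalIntegral.integral_const_mul]
    congr 1
    rw [aux_ftc (k-1) 0 α]
    have hk1' : k - 1 + 1 = k := Nat.succ_pred_eq_of_pos hk1
    rw [hk1']
    have hcast : ((k-1:ℕ):ℝ) + 1 = (k:ℝ) := by
      rw [Nat.cast_sub hk1]; push_cast; ring
    simp only [neg_zero, Real.exp_zero, sub_self, zero_pow (show k ≠ 0 by omega),
      zero_div, sub_zero, hβdef, hcast]
  -- main estimate
  have hmain : Tendsto (fun k : ℕ => (k:ℝ) * J k / β ^ k) atTop (nhds 0) := by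
    rw [Metric.tendsto_atTop]
    intro ε hε
    set ε₀ := ε / (2 * Real.exp α) with hε₀def
    have hε₀ : 0 < ε₀ := by positivity
    have hGα : G α = 0 := by
      simp only [hGdef]
      rw [← Real.exp_add]
      simp
    obtain ⟨δ, hδ0, hδ⟩ :=
      Metric.continuousAt_iff.mp (hGcont.continuousAt : ContinuousAt G α) ε₀ hε₀
    set c := α - min (δ/2) (α/2) with hcdef
    have hminδ : min (δ/2) (α/2) ≤ δ/2 := min_le_left _ _
    have hminα : min (δ/2) (α/2) ≤ α/2 := min_le_right _ _
    have hmin0 : 0 < min (δ/2) (α/2) := lt_min (by linarith) (by linarith)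
    have hc0 : 0 < c := by simp only [hcdef]; linarith
    have hcα : c < α := by simp only [hcdef]; linarith
    have hsmall : ∀ t ∈ Set.Icc c α, |G t| ≤ ε₀ := by
      intro t ht
      have hd : dist t α < δ := by
        rw [Real.dist_eq, abs_sub_lt_iff]
        constructor
        · linarith [ht.2]
        · have h1 := ht.1
          simp only [hcdef] at h1
          linarith
      simpa [hGα, Real.dist_eq] using (hδ hd).le
    set φc := 1 - Real.exp (-c) with hφcdef
    have hφc0 : 0 < φc := by
      have : Real.exp (-c) < 1 := Real.exp_lt_one_iff.mpr (by linarith)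
      simp only [hφcdef]; linarith
    have hφcβ : φc < β := by
      have : Real.exp (-α) < Real.exp (-c) := Real.exp_lt_exp.mpr (by linarith)
      simp only [hφcdef, hβdef]; linarith
    set M := 1 + α + Real.exp α with hMdef
    have hM0 : 0 < M := by positivity
    clear_value ε₀ c φc M
    -- bound on J k for k ≥ 1
    have hJbound : ∀ k : ℕ, 1 ≤ k →
        |J k| ≤ M * φc ^ (k-1) * c + ε₀ * Real.exp α * (β ^ k / k) := by
      intro k hk1
      have hint1 : IntervalIntegrable (fun t => G t * (1 - Real.exp (-t)) ^ (k-1))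
          MeasureTheory.volume 0 c := (hGcont.mul (hφcont _)).intervalIntegrable _ _
      have hint2 : IntervalIntegrable (fun t => G t * (1 - Real.exp (-t)) ^ (k-1))
          MeasureTheory.volume c α := (hGcont.mul (hφcont _)).intervalIntegrable _ _
      have hsplit : J k = (∫ t in (0:ℝ)..c, G t * (1 - Real.exp (-t)) ^ (k-1))
          + ∫ t in c..α, G t * (1 - Real.exp (-t)) ^ (k-1) := by
        rw [hJdef]
        exact (intervalIntegral.integral_add_adjacent_intervals hint1 hint2).symm
      have hb1 : |∫ t in (0:ℝ)..c, G t * (1 - Real.exp (-t)) ^ (k-1)| ≤ M * φc ^ (k-1) * c := by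
        have := intervalIntegral.norm_integral_le_of_norm_le_const
          (C := M * φc ^ (k-1)) (a := (0:ℝ)) (b := c)
          (f := fun t => G t * (1 - Real.exp (-t)) ^ (k-1)) ?_
        · rw [Real.norm_eq_abs] at this
          calc |∫ t in (0:ℝ)..c, G t * (1 - Real.exp (-t)) ^ (k-1)|
              ≤ M * φc ^ (k-1) * |c - 0| := this
            _ = M * φc ^ (k-1) * c := by rw [sub_zero, abs_of_pos hc0]
        · intro x hx
          rw [Set.uIoc_of_le hc0.le] at hx
          obtain ⟨hx0, hxc⟩ := hx
          have hex1 : Real.exp (-x) ≤ 1 := Real.exp_le_one_iff.mpr (by linarith)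
          have hφx0 : 0 ≤ 1 - Real.exp (-x) := by linarith
          have hφxc : 1 - Real.exp (-x) ≤ φc := by
            have : Real.exp (-c) ≤ Real.exp (-x) := Real.exp_le_exp.mpr (by linarith)
            simp only [hφcdef]; linarith
          have hGb : |G x| ≤ M := by
            have h1 : |1 - α + x| ≤ 1 + α := by
              rw [abs_le]; constructor <;> [linarith; linarith]
            have h2 : |Real.exp α * Real.exp (-x)| ≤ Real.exp α := by
              rw [abs_of_pos (by positivity)]
              nlinarith [Real.exp_pos α]
            have h0 : |G x| ≤ |1 - α + x| + |Real.exp α * Real.exp (-x)| := by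
              simp only [hGdef]; exact abs_sub _ _
            simp only [hMdef]; linarith
          rw [Real.norm_eq_abs, abs_mul, abs_pow, abs_of_nonneg hφx0]
          exact mul_le_mul hGb (pow_le_pow_left₀ hφx0 hφxc _) (by positivity) hM0.le
      have hb2 : |∫ t in c..α, G t * (1 - Real.exp (-t)) ^ (k-1)|
          ≤ ε₀ * Real.exp α * (β ^ k / k) := by
        have habs := intervalIntegral.abs_integral_le_integral_abs
          (μ := MeasureTheory.volume)
          (f := fun t => G t * (1 - Real.exp (-t)) ^ (k-1)) hcα.le
        have hmono : (∫ t in c..α, |G t * (1 - Real.exp (-t)) ^ (k-1)|)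
            ≤ ∫ t in c..α, ε₀ * (Real.exp α * (Real.exp (-t) * (1 - Real.exp (-t)) ^ (k-1))) := by
          apply intervalIntegral.integral_mono_on hcα.le
          · exact ((hGcont.mul (hφcont _)).abs).intervalIntegrable _ _
          · exact (continuous_const.mul (continuous_const.mul
              ((Real.continuous_exp.comp continuous_neg).mul (hφcont _)))).intervalIntegrable _ _
          · intro t ht
            obtain ⟨htc, htα⟩ := ht
            have ht0 : 0 < t := lt_of_lt_of_le hc0 htc
            have hex1 : Real.exp (-t) ≤ 1 := Real.exp_le_one_iff.mpr (by linarith)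
            have hφt0 : 0 ≤ 1 - Real.exp (-t) := by linarith
            have hpow0 : 0 ≤ (1 - Real.exp (-t)) ^ (k-1) := pow_nonneg hφt0 _
            have h1 : (1:ℝ) ≤ Real.exp α * Real.exp (-t) := by
              rw [← Real.exp_add]
              exact Real.one_le_exp (by linarith)
            have hGt : |G t| ≤ ε₀ := hsmall t ⟨htc, htα⟩
            rw [abs_mul, abs_pow, abs_of_nonneg hφt0]
            calc |G t| * (1 - Real.exp (-t)) ^ (k-1)
                ≤ ε₀ * (1 - Real.exp (-t)) ^ (k-1) :=
                  mul_le_mul_of_nonneg_right hGt hpow0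
              _ ≤ ε₀ * (Real.exp α * (Real.exp (-t) * (1 - Real.exp (-t)) ^ (k-1))) := by
                  apply mul_le_mul_of_nonneg_left _ hε₀.le
                  nlinarith
        have hval : (∫ t in c..α, ε₀ * (Real.exp α * (Real.exp (-t) * (1 - Real.exp (-t)) ^ (k-1))))
            = ε₀ * Real.exp α * ((β ^ k - φc ^ k) / k) := by
          rw [intervalIntegral.integral_const_mul, intervalIntegral.integral_const_mul,
            aux_ftc (k-1) c α]
          have hk1' : k - 1 + 1 = k := Nat.succ_pred_eq_of_pos hk1
          have hcast : ((k-1:ℕ):ℝ) + 1 = (k:ℝ) := by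
            rw [Nat.cast_sub hk1]; push_cast; ring
          rw [hk1']
          push_cast [hcast]
          simp only [hβdef, hφcdef]
          ring
        have hle : ε₀ * Real.exp α * ((β ^ k - φc ^ k) / k)
            ≤ ε₀ * Real.exp α * (β ^ k / k) := by
          have hk0 : (0:ℝ) < k := by exact_mod_cast hk1
          have : 0 ≤ φc ^ k := pow_nonneg hφc0.le _
          exact mul_le_mul_of_nonneg_left
            ((div_le_div_iff_of_pos_right hk0).mpr (by linarith)) (by positivity)
        calc |∫ t in c..α, G t * (1 - Real.exp (-t)) ^ (k-1)|
            ≤ ∫ t in c..α, ε₀ * (Real.exp α * (Real.exp (-t) * (1 - Real.exp (-t)) ^ (k-1))) :=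
              habs.trans hmono
          _ = ε₀ * Real.exp α * ((β ^ k - φc ^ k) / k) := hval
          _ ≤ ε₀ * Real.exp α * (β ^ k / k) := hle
      calc |J k| ≤ |∫ t in (0:ℝ)..c, G t * (1 - Real.exp (-t)) ^ (k-1)|
            + |∫ t in c..α, G t * (1 - Real.exp (-t)) ^ (k-1)| := by
            rw [hsplit]; exact abs_add_le _ _
        _ ≤ M * φc ^ (k-1) * c + ε₀ * Real.exp α * (β ^ k / k) := add_le_add hb1 hb2
    -- geometric term tends to 0
    have hterm : Tendsto (fun k : ℕ => (M * c / φc) * ((k:ℝ) * (φc/β) ^ k)) atTop (nhds 0) := by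
      have := (tendsto_self_mul_const_pow_of_lt_one (div_nonneg hφc0.le hβ0.le)
        ((div_lt_one hβ0).mpr hφcβ)).const_mul (M*c/φc)
      simpa using this
    rw [Metric.tendsto_atTop] at hterm
    obtain ⟨N, hN⟩ := hterm (ε/2) (by linarith)
    refine ⟨max N 1, fun k hk' => ?_⟩
    have hk1 : 1 ≤ k := le_trans (le_max_right N 1) hk'
    have hkN : N ≤ k := le_trans (le_max_left N 1) hk'
    have hk0 : (0:ℝ) < k := by exact_mod_cast hk1
    have hβk : (0:ℝ) < β ^ k := pow_pos hβ0 k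
    rw [Real.dist_eq, sub_zero]
    have h1 : |(k:ℝ) * J k / β ^ k| = (k:ℝ) * |J k| / β ^ k := by
      rw [abs_div, abs_mul, abs_of_pos hk0, abs_of_pos hβk]
    rw [h1]
    have h2 : (k:ℝ) * |J k| / β ^ k
        ≤ (M * c / φc) * ((k:ℝ) * (φc/β) ^ k) + ε₀ * Real.exp α := by
      have := hJbound k hk1
      have he : (k:ℝ) * (M * φc ^ (k-1) * c + ε₀ * Real.exp α * (β ^ k / k)) / β ^ k
          = (M * c / φc) * ((k:ℝ) * (φc/β) ^ k) + ε₀ * Real.exp α := by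
        have hφck : φc ^ (k-1) * φc = φc ^ k := by
          rw [← pow_succ]; congr 1; omega
        rw [div_pow]
        field_simp
        rw [← hφck]
        ring
      calc (k:ℝ) * |J k| / β ^ k
          ≤ (k:ℝ) * (M * φc ^ (k-1) * c + ε₀ * Real.exp α * (β ^ k / k)) / β ^ k := by
            exact (div_le_div_iff_of_pos_right hβk).mpr (mul_le_mul_of_nonneg_left this hk0.le)
        _ = _ := he
    have h3 : ε₀ * Real.exp α = ε / 2 := by
      rw [hε₀def]
      field_simp
    have h4 := hN k hkN
    rw [Real.dist_eq, sub_zero, abs_of_nonneg] at h4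
    · linarith
    · positivity
  -- final assembly
  have hfinal : Tendsto (fun k : ℕ => 1 + ((k:ℝ) * J k / β ^ k) / Real.exp α)
      atTop (nhds 1) := by
    have h := (hmain.div_const (Real.exp α)).const_add 1
    simp only [zero_div, add_zero] at h
    exact h
  refine Tendsto.congr' ?_ hfinal
  filter_upwards [eventually_ge_atTop 1] with k hk1
  have hk0 : (k:ℝ) ≠ 0 := Nat.cast_ne_zero.mpr (by omega)
  have hβk : (β:ℝ) ^ k ≠ 0 := (pow_pos hβ0 k).ne'
  rw [hkey k hk1]
  field_simp
  ring
end

section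
/- Fix α > 0. As k → ∞, p_α^E(k) ~ α⁻¹ (e^α - 1) k⁻² (1 - e^{-α})^k, where p_α^E(k) = α⁻¹ ∫₀^α (α - t) e^{-t} (1 - e^{-t})^{k-1} dt. -/
open Real Filter MeasureTheory Set Topology intervalIntegral

-- key pointwise inequality: 1 - e^{-α} e^h ≤ (1-e^{-α}) e^{-c h}, c = e^{-α}/(1-e^{-α})
lemma key_ineq (α : ℝ) (hα : 0 < α) (h : ℝ) :
    1 - Real.exp (-α) * Real.exp h ≤
      (1 - Real.exp (-α)) * Real.exp (-(Real.exp (-α) / (1 - Real.exp (-α)) * h)) := by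
  have hq : 0 < 1 - Real.exp (-α) := by
    have := Real.exp_lt_one_iff.mpr (neg_lt_zero.mpr hα)
    linarith
  set c := Real.exp (-α) / (1 - Real.exp (-α)) with hc
  have h1 : (-(c*h)) + 1 ≤ Real.exp (-(c*h)) := Real.add_one_le_exp _
  have h2 : h + 1 ≤ Real.exp h := Real.add_one_le_exp _
  have hcq : (1 - Real.exp (-α)) * c = Real.exp (-α) := by
    rw [hc]; field_simp [hq.ne']
  have hcqh : (1 - Real.exp (-α)) * (c * h) = Real.exp (-α) * h := by
    rw [← mul_assoc, hcq]
  nlinarith [Real.exp_pos (-α), mul_le_mul_of_nonneg_left h1 hq.le,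
    mul_le_mul_of_nonneg_left h2 (Real.exp_pos (-α)).le]

lemma deriv_w (k : ℕ) (t : ℝ) :
    HasDerivAt (fun t : ℝ => (1 - Real.exp (-t)) ^ k)
      ((k : ℝ) * (1 - Real.exp (-t)) ^ (k - 1) * Real.exp (-t)) t := by
  have h1 : HasDerivAt (fun t : ℝ => 1 - Real.exp (-t)) (Real.exp (-t)) t := by
    have := ((Real.hasDerivAt_exp (-t)).comp t ((hasDerivAt_id t).neg)).const_sub 1
    simpa using this
  simpa [mul_comm] using h1.fun_pow k

lemma ibp (α : ℝ) (k : ℕ) (hk : 1 ≤ k) :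
    ∫ t in (0:ℝ)..α, (α - t) * Real.exp (-t) * (1 - Real.exp (-t)) ^ (k - 1)
      = (k : ℝ)⁻¹ * ∫ t in (0:ℝ)..α, (1 - Real.exp (-t)) ^ k := by
  have hk0 : (k : ℝ) ≠ 0 := Nat.cast_ne_zero.mpr (by omega)
  have hibp := intervalIntegral.integral_mul_deriv_eq_deriv_mul
    (u := fun t => α - t) (u' := fun _ => (-1 : ℝ))
    (v := fun t => (1 - Real.exp (-t)) ^ k)
    (v' := fun t => (k : ℝ) * (1 - Real.exp (-t)) ^ (k - 1) * Real.exp (-t))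
    (a := 0) (b := α)
    (fun x _ => by simpa using ((hasDerivAt_id x).const_sub α))
    (fun x _ => deriv_w k x)
    ((continuous_const).intervalIntegrable 0 α)
    ((by continuity : Continuous fun t : ℝ => (k : ℝ) * (1 - Real.exp (-t)) ^ (k - 1) * Real.exp (-t)).intervalIntegrable 0 α)
  have h2 : ∫ t in (0:ℝ)..α, (α - t) * ((k : ℝ) * (1 - Real.exp (-t)) ^ (k - 1) * Real.exp (-t))
      = (k : ℝ) * ∫ t in (0:ℝ)..α, (α - t) * Real.exp (-t) * (1 - Real.exp (-t)) ^ (k - 1) := by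
    rw [← intervalIntegral.integral_const_mul]
    congr 1; ext t; ring
  rw [h2] at hibp
  have h3 : ∫ t in (0:ℝ)..α, (-1 : ℝ) * (1 - Real.exp (-t)) ^ k
      = -∫ t in (0:ℝ)..α, (1 - Real.exp (-t)) ^ k := by
    rw [← intervalIntegral.integral_neg]; congr 1; ext t; ring
  rw [h3] at hibp
  have hz : (1 - Real.exp (-(0:ℝ))) ^ k = 0 := by
    simp [zero_pow (by omega : k ≠ 0)]
  field_simp
  rw [mul_comm, hibp, hz]
  ring

lemma cov (α : ℝ) (k : ℕ) (hk : 1 ≤ k) :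
    ∫ s in (0:ℝ)..(k*α), (1 - Real.exp (-(α - s/k))) ^ k
      = (k : ℝ) * ∫ t in (0:ℝ)..α, (1 - Real.exp (-t)) ^ k := by
  have hk0 : (k : ℝ) ≠ 0 := Nat.cast_ne_zero.mpr (by omega)
  have h1 := intervalIntegral.integral_comp_div
    (f := fun u => (1 - Real.exp (-(α - u))) ^ k) (a := 0) (b := (k:ℝ)*α) hk0
  rw [h1]
  have h2 := intervalIntegral.integral_comp_sub_left
    (f := fun t => (1 - Real.exp (-t)) ^ k) (a := (0:ℝ)/k) (b := ((k:ℝ)*α)/k) α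
  simp only [smul_eq_mul]
  rw [h2]
  congr 1
  · rw [mul_comm (k:ℝ) α, mul_div_assoc, div_self hk0, mul_one, sub_self, zero_div, sub_zero]

lemma ptwise (α : ℝ) (hα : 0 < α) (s : ℝ) (hs : 0 < s) :
    Tendsto (fun k : ℕ => (1 - Real.exp (-(α - s/k))) ^ k / (1 - Real.exp (-α)) ^ k)
      atTop (𝓝 (Real.exp (-(Real.exp (-α) / (1 - Real.exp (-α)) * s)))) := by
  have hq : 0 < 1 - Real.exp (-α) := by
    have := Real.exp_lt_one_iff.mpr (neg_lt_zero.mpr hα); linarith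
  set q := 1 - Real.exp (-α) with hqdef
  set c := Real.exp (-α) / q with hcdef
  set φ : ℝ → ℝ := fun t => Real.log (1 - Real.exp (-t)) with hφdef
  have hφ : HasDerivAt φ c α := by
    have h1 : HasDerivAt (fun t : ℝ => 1 - Real.exp (-t)) (Real.exp (-α)) α := by
      have := ((Real.hasDerivAt_exp (-α)).comp α ((hasDerivAt_id α).neg)).const_sub 1
      simpa using this
    exact h1.log hq.ne'
  have hslope := hasDerivAt_iff_tendsto_slope.mp hφ
  have hsk : Tendsto (fun k : ℕ => s / (k:ℝ)) atTop (𝓝 0) :=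
    tendsto_const_div_atTop_nhds_zero_nat s
  have hx : Tendsto (fun k : ℕ => α - s/(k:ℝ)) atTop (𝓝[≠] α) := by
    rw [tendsto_nhdsWithin_iff]
    constructor
    · simpa using hsk.const_sub α
    · filter_upwards [eventually_ge_atTop 1] with k hk
      have hk0 : (0:ℝ) < (k:ℝ) := by exact_mod_cast hk
      have : 0 < s / (k:ℝ) := div_pos hs hk0
      simp only [mem_compl_iff, mem_singleton_iff]
      intro h
      nlinarith [sub_eq_iff_eq_add.mp h]
  have hcomp : Tendsto (fun k : ℕ => slope φ α (α - s/(k:ℝ))) atTop (𝓝 c) :=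
    hslope.comp hx
  have hL : Tendsto (fun k : ℕ => (k:ℝ) * (φ (α - s/(k:ℝ)) - φ α)) atTop (𝓝 (-s * c)) := by
    have h1 := hcomp.const_mul (-s)
    refine Tendsto.congr' ?_ h1
    filter_upwards [eventually_ge_atTop 1] with k hk
    have hk0 : ((k:ℝ)) ≠ 0 := by positivity
    rw [slope_def_field]
    have hz : α - s/(k:ℝ) - α = -(s/(k:ℝ)) := by ring
    rw [hz]
    field_simp
  have hexp := (Real.continuous_exp.tendsto _).comp hL
  have heq : Real.exp (-s * c) = Real.exp (-(c * s)) := by ring_nf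
  rw [heq] at hexp
  refine Tendsto.congr' ?_ hexp
  have hev : ∀ᶠ k : ℕ in atTop, s / (k:ℝ) < α := by
    have := hsk
    have h2 := this.eventually_lt_const hα
    exact h2
  filter_upwards [hev, eventually_ge_atTop 1] with k hka hk1
  have hk0 : (0:ℝ) < (k:ℝ) := by exact_mod_cast hk1
  have ht : 0 < α - s/(k:ℝ) := by linarith
  have hxpos : 0 < 1 - Real.exp (-(α - s/(k:ℝ))) := by
    have : Real.exp (-(α - s/(k:ℝ))) < 1 := Real.exp_lt_one_iff.mpr (by linarith)
    linarith
  show Real.exp ((k:ℝ) * (φ (α - s/(k:ℝ)) - φ α)) = _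
  rw [hφdef]
  simp only
  rw [← Real.log_div hxpos.ne' hq.ne', Real.exp_nat_mul, Real.exp_log (div_pos hxpos hq),
    div_pow]

lemma dct (α : ℝ) (hα : 0 < α) :
    Tendsto (fun k : ℕ => ∫ s : ℝ, (Ioc (0:ℝ) ((k:ℝ)*α)).indicator
        (fun s => (1 - Real.exp (-(α - s/(k:ℝ)))) ^ k / (1 - Real.exp (-α)) ^ k) s)
      atTop (𝓝 (Real.exp α - 1)) := by
  have hq : 0 < 1 - Real.exp (-α) := by
    have := Real.exp_lt_one_iff.mpr (neg_lt_zero.mpr hα); linarith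
  set q := 1 - Real.exp (-α) with hqdef
  set c := Real.exp (-α) / q with hcdef
  have hc : 0 < c := div_pos (Real.exp_pos _) hq
  have hbint : Integrable ((Ioi (0:ℝ)).indicator fun s => Real.exp (-(c*s))) := by
    rw [integrable_indicator_iff measurableSet_Ioi]
    simpa [neg_mul] using exp_neg_integrableOn_Ioi 0 hc
  have hval : ∫ s : ℝ, (Ioi (0:ℝ)).indicator (fun s => Real.exp (-(c*s))) s
      = Real.exp α - 1 := by
    rw [MeasureTheory.integral_indicator measurableSet_Ioi]
    have h1 : ∫ s in Ioi (0:ℝ), Real.exp (-(c*s))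
        = c⁻¹ • ∫ x in Ioi (c*0), Real.exp (-x) :=
      integral_comp_mul_left_Ioi (fun x => Real.exp (-x)) 0 hc
    rw [h1, mul_zero, integral_exp_neg_Ioi, smul_eq_mul]
    rw [hcdef, hqdef]
    have h2 := Real.exp_ne_zero α
    rw [Real.exp_neg]
    field_simp
    rw [neg_zero, Real.exp_zero, mul_one]
  have key := MeasureTheory.tendsto_integral_of_dominated_convergence
    (F := fun k : ℕ => (Ioc (0:ℝ) ((k:ℝ)*α)).indicator
        (fun s => (1 - Real.exp (-(α - s/(k:ℝ)))) ^ k / q ^ k))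
    (f := (Ioi (0:ℝ)).indicator fun s => Real.exp (-(c*s)))
    (bound := (Ioi (0:ℝ)).indicator fun s => Real.exp (-(c*s)))
    (fun k => (Continuous.aestronglyMeasurable (by continuity)).indicator measurableSet_Ioc)
    hbint
    ?_ ?_
  · rw [hval] at key; exact key
  · -- bound
    intro k
    refine Eventually.of_forall fun s => ?_
    beta_reduce
    by_cases hs : s ∈ Ioc (0:ℝ) ((k:ℝ)*α)
    · rcases Nat.eq_zero_or_pos k with hk0 | hk1
      · exfalso; rw [hk0] at hs; simp at hs
      have hkR : (0:ℝ) < (k:ℝ) := by exact_mod_cast hk1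
      have hska : s/(k:ℝ) ≤ α := by
        rw [div_le_iff₀ hkR]; linarith [hs.2, mul_comm ((k:ℝ)) α]
      have ht : 0 ≤ α - s/(k:ℝ) := by linarith
      have hx0 : 0 ≤ 1 - Real.exp (-(α - s/(k:ℝ))) := by
        have : Real.exp (-(α - s/(k:ℝ))) ≤ 1 := Real.exp_le_one_iff.mpr (by linarith)
        linarith
      rw [indicator_of_mem hs, indicator_of_mem (mem_Ioi.mpr hs.1)]
      rw [Real.norm_eq_abs, abs_of_nonneg (by positivity)]
      have hkey := key_ineq α hα (s/(k:ℝ))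
      have hxeq : Real.exp (-(α - s/(k:ℝ))) = Real.exp (-α) * Real.exp (s/(k:ℝ)) := by
        rw [← Real.exp_add]; ring_nf
      have hstep : (1 - Real.exp (-(α - s/(k:ℝ)))) / q ≤ Real.exp (-(c * (s/(k:ℝ)))) := by
        rw [div_le_iff₀ hq, hxeq]
        calc 1 - Real.exp (-α) * Real.exp (s/(k:ℝ))
            ≤ q * Real.exp (-(c * (s/(k:ℝ)))) := by
              simpa [hqdef, hcdef] using hkey
          _ = Real.exp (-(c * (s/(k:ℝ)))) * q := mul_comm _ _
      calc (1 - Real.exp (-(α - s/(k:ℝ)))) ^ k / q ^ k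
          = ((1 - Real.exp (-(α - s/(k:ℝ)))) / q) ^ k := (div_pow _ _ _).symm
        _ ≤ (Real.exp (-(c * (s/(k:ℝ))))) ^ k :=
            pow_le_pow_left₀ (div_nonneg hx0 hq.le) hstep k
        _ = Real.exp ((k:ℝ) * (-(c * (s/(k:ℝ))))) := (Real.exp_nat_mul _ k).symm
        _ = Real.exp (-(c*s)) := by
            congr 1; field_simp
    · rw [indicator_of_notMem hs]
      simp only [norm_zero]
      exact indicator_nonneg (fun s _ => (Real.exp_pos _).le) s
  · -- pointwise limit
    refine Eventually.of_forall fun s => ?_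
    by_cases hs : 0 < s
    · rw [indicator_of_mem (mem_Ioi.mpr hs)]
      refine Tendsto.congr' ?_ (ptwise α hα s hs)
      have hev : ∀ᶠ k : ℕ in atTop, s ≤ (k:ℝ)*α := by
        have h1 : Tendsto (fun k : ℕ => (k:ℝ)*α) atTop atTop :=
          Tendsto.atTop_mul_const hα tendsto_natCast_atTop_atTop
        exact h1.eventually_ge_atTop s
      filter_upwards [hev] with k hk
      rw [indicator_of_mem (mem_Ioc.mpr ⟨hs, hk⟩)]
    · have h0 : ∀ k : ℕ, (Ioc (0:ℝ) ((k:ℝ)*α)).indicator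
          (fun s => (1 - Real.exp (-(α - s/(k:ℝ)))) ^ k / q ^ k) s = 0 := fun k =>
        indicator_of_notMem (fun h => hs h.1) _
      rw [indicator_of_notMem (by simpa using hs)]
      exact Tendsto.congr (fun k => (h0 k).symm) tendsto_const_nhds

lemma link (α : ℝ) (hα : 0 < α) (k : ℕ) (hk : 1 ≤ k) :
    ∫ s : ℝ, (Ioc (0:ℝ) ((k:ℝ)*α)).indicator
        (fun s => (1 - Real.exp (-(α - s/(k:ℝ)))) ^ k / (1 - Real.exp (-α)) ^ k) s
      = ((k:ℝ) * ∫ t in (0:ℝ)..α, (1 - Real.exp (-t)) ^ k) / (1 - Real.exp (-α)) ^ k := by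
  rw [MeasureTheory.integral_indicator measurableSet_Ioc]
  have hkα : (0:ℝ) ≤ (k:ℝ)*α := by positivity
  rw [← intervalIntegral.integral_of_le hkα, intervalIntegral.integral_div, cov α k hk]

/-- Asymptotics of `p_α^E`: as `k → ∞`, `p_α^E(k) ~ α⁻¹(e^α - 1) k⁻² (1-e^{-α})^k`. -/
theorem stmt_13 (α : ℝ) (hα : 0 < α) (p : ℕ → ℝ)
    (hk : ∀ k : ℕ, 1 ≤ k →
      p k = α⁻¹ * ∫ t in (0:ℝ)..α,
        (α - t) * Real.exp (-t) * (1 - Real.exp (-t)) ^ (k - 1)) :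
    Tendsto (fun k : ℕ =>
        p k / (α⁻¹ * (Real.exp α - 1) * ((k : ℝ) ^ 2)⁻¹ * (1 - Real.exp (-α)) ^ k))
      atTop (nhds 1) := by
  have hq : 0 < 1 - Real.exp (-α) := by
    have := Real.exp_lt_one_iff.mpr (neg_lt_zero.mpr hα); linarith
  have hE : 0 < Real.exp α - 1 := by
    have := Real.add_one_le_exp α; linarith
  have h1 : Tendsto (fun k : ℕ => (∫ s : ℝ, (Ioc (0:ℝ) ((k:ℝ)*α)).indicator
        (fun s => (1 - Real.exp (-(α - s/(k:ℝ)))) ^ k / (1 - Real.exp (-α)) ^ k) s)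
      / (Real.exp α - 1)) atTop (𝓝 1) := by
    have := (dct α hα).div_const (Real.exp α - 1)
    rwa [div_self hE.ne'] at this
  refine h1.congr' ?_
  filter_upwards [eventually_ge_atTop 1] with k hk1
  rw [link α hα k hk1, hk k hk1, ibp α k hk1]
  have hkR : (0:ℝ) < (k:ℝ) := by exact_mod_cast hk1
  have hqk : (1 - Real.exp (-α)) ^ k ≠ 0 := by positivity
  field_simp
end

section
/- For α ∈ (0,1] and |x| < (1 - e^{-α})⁻¹, the probability generating function of D_α^E satisfies ∑_{k=0}^∞ p_α^E(k) x^k = 1 - α/2 + (x/α) ∫₀^α (α - t) / ((1-x)e^t + x) dt. -/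
open Real MeasureTheory

/-- The probability generating function of `D_α^E`:
for `|x| < (1-e^{-α})⁻¹`,
`∑ p_α^E(k) x^k = 1 - α/2 + (x/α) ∫₀^α (α-t)/((1-x)eᵗ + x) dt`. -/
theorem stmt_14 (α : ℝ) (hα : α ∈ Set.Ioc (0:ℝ) 1) (p : ℕ → ℝ)
    (h0 : p 0 = 1 - α / 2)
    (hk : ∀ k : ℕ, 1 ≤ k →
      p k = α⁻¹ * ∫ t in (0:ℝ)..α,
        (α - t) * Real.exp (-t) * (1 - Real.exp (-t)) ^ (k - 1))
    (x : ℝ) (hx : |x| < (1 - Real.exp (-α))⁻¹) :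
    ∑' k : ℕ, p k * x ^ k =
      1 - α / 2 + (x / α) * ∫ t in (0:ℝ)..α,
        (α - t) / ((1 - x) * Real.exp t + x) := by
  obtain ⟨hα0, hα1⟩ := hα
  have heα : Real.exp (-α) < 1 := by
    rw [Real.exp_lt_one_iff]; linarith
  have h1e : 0 < 1 - Real.exp (-α) := by linarith
  set r : ℝ := |x| * (1 - Real.exp (-α)) with hr_def
  have hr0 : 0 ≤ r := mul_nonneg (abs_nonneg x) h1e.le
  have hr1 : r < 1 := by
    have := (mul_lt_mul_of_pos_right hx h1e)
    rwa [inv_mul_cancel₀ h1e.ne'] at this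
  -- the key functions
  set F : ℕ → ℝ → ℝ := fun k t => (α - t) * Real.exp (-t) * (x * (1 - Real.exp (-t))) ^ k
    with hF_def
  -- bound on the geometric ratio
  have hq : ∀ t ∈ Set.Ioc (0:ℝ) α, ‖x * (1 - Real.exp (-t))‖ ≤ r := by
    intro t ht
    have h1 : Real.exp (-α) ≤ Real.exp (-t) := Real.exp_le_exp.2 (by linarith [ht.2])
    have h2 : Real.exp (-t) ≤ 1 := Real.exp_le_one_iff.2 (by linarith [ht.1])
    rw [norm_mul, Real.norm_eq_abs, Real.norm_eq_abs, abs_of_nonneg (by linarith : (0:ℝ) ≤ 1 - Real.exp (-t))]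
    exact mul_le_mul_of_nonneg_left (by linarith) (abs_nonneg x)
  -- bound on F
  have hFbound : ∀ k : ℕ, ∀ t ∈ Set.Ioc (0:ℝ) α, ‖F k t‖ ≤ α * r ^ k := by
    intro k t ht
    have h2 : Real.exp (-t) ≤ 1 := Real.exp_le_one_iff.2 (by linarith [ht.1])
    rw [hF_def, norm_mul, norm_mul, norm_pow]
    have h3 : ‖x * (1 - Real.exp (-t))‖ ^ k ≤ r ^ k :=
      pow_le_pow_left₀ (norm_nonneg _) (hq t ht) k
    have h4 : ‖(α - t)‖ ≤ α := by
      rw [Real.norm_eq_abs, abs_of_nonneg (by linarith [ht.2])]; linarith [ht.1]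
    have h5 : ‖Real.exp (-t)‖ ≤ 1 := by rwa [Real.norm_eq_abs, abs_of_pos (Real.exp_pos _)]
    calc ‖α - t‖ * ‖Real.exp (-t)‖ * ‖x * (1 - Real.exp (-t))‖ ^ k
        ≤ α * 1 * r ^ k := by
          apply mul_le_mul _ h3 (pow_nonneg (norm_nonneg _) k)
            (by positivity)
          exact mul_le_mul h4 h5 (norm_nonneg _) (by linarith)
      _ = α * r ^ k := by ring
  -- each term of the series, rewritten as an integral of F k
  have hterm : ∀ k : ℕ, p (k + 1) * x ^ (k + 1) =
      x * α⁻¹ * ∫ t in (0:ℝ)..α, F k t := by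
    intro k
    rw [hk (k + 1) (Nat.le_add_left 1 k)]
    simp only [Nat.add_sub_cancel]
    have : (∫ t in (0:ℝ)..α, F k t) =
        x ^ k * ∫ t in (0:ℝ)..α, (α - t) * Real.exp (-t) * (1 - Real.exp (-t)) ^ k := by
      rw [← intervalIntegral.integral_const_mul]
      apply intervalIntegral.integral_congr
      intro t _
      simp only [hF_def]
      rw [mul_pow]; ring
    rw [this]; ring
  -- norm bound on each term
  have hFcont : ∀ k : ℕ, Continuous (F k) := by
    intro k
    apply Continuous.mul
    · exact (continuous_const.sub continuous_id).mul (Real.continuous_exp.comp continuous_neg)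
    · exact ((continuous_const.mul (continuous_const.sub
        (Real.continuous_exp.comp continuous_neg)))).pow k
  have hFint : ∀ k : ℕ, IntegrableOn (F k) (Set.Ioc 0 α) := fun k =>
    (hFcont k).integrableOn_Ioc
  have hIbound : ∀ k : ℕ, ‖∫ t in (0:ℝ)..α, F k t‖ ≤ α * r ^ k * α := by
    intro k
    have := intervalIntegral.norm_integral_le_of_norm_le_const (C := α * r ^ k)
      (f := F k) (a := (0:ℝ)) (b := α) ?_
    · calc ‖∫ t in (0:ℝ)..α, F k t‖ ≤ α * r ^ k * |α - 0| := this
        _ = α * r ^ k * α := by rw [sub_zero, abs_of_pos hα0]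
    · intro t ht
      rw [Set.uIoc_of_le hα0.le] at ht
      exact hFbound k t ht
  -- summability of the series of terms
  have hsum1 : Summable (fun k : ℕ => p (k + 1) * x ^ (k + 1)) := by
    apply Summable.of_norm_bounded (g := fun k => (|x| * α⁻¹ * (α * α)) * r ^ k)
      (((summable_geometric_of_lt_one hr0 hr1).mul_left _))
    intro k
    rw [hterm k, norm_mul, norm_mul, Real.norm_eq_abs x, Real.norm_eq_abs α⁻¹,
      abs_of_pos (inv_pos.2 hα0)]
    calc |x| * α⁻¹ * ‖∫ t in (0:ℝ)..α, F k t‖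
        ≤ |x| * α⁻¹ * (α * r ^ k * α) :=
          mul_le_mul_of_nonneg_left (hIbound k) (by positivity)
      _ = |x| * α⁻¹ * (α * α) * r ^ k := by ring
  have hsum : Summable (fun k : ℕ => p k * x ^ k) := (summable_nat_add_iff 1).mp hsum1
  -- split off the first term
  rw [Summable.tsum_eq_zero_add hsum]
  simp only [pow_zero, mul_one, h0]
  congr 1
  -- now handle the tail
  have hint_norm : Summable fun k : ℕ => ∫ t in Set.Ioc (0:ℝ) α, ‖F k t‖ := by
    apply Summable.of_nonneg_of_le (fun k => integral_nonneg fun t => norm_nonneg _)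
      (fun k => ?_) (((summable_geometric_of_lt_one hr0 hr1).mul_left (α * α)))
    have h1 : (∫ t in Set.Ioc (0:ℝ) α, ‖F k t‖) = ∫ t in (0:ℝ)..α, ‖F k t‖ := by
      rw [intervalIntegral.integral_of_le hα0.le]
    rw [h1]
    have h2 : ‖∫ t in (0:ℝ)..α, ‖F k t‖‖ ≤ α * r ^ k * |α - 0| := by
      apply intervalIntegral.norm_integral_le_of_norm_le_const
      intro t ht
      rw [Set.uIoc_of_le hα0.le] at ht
      rw [norm_norm]
      exact hFbound k t ht
    rw [sub_zero, abs_of_pos hα0] at h2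
    calc (∫ t in (0:ℝ)..α, ‖F k t‖) ≤ ‖∫ t in (0:ℝ)..α, ‖F k t‖‖ := le_abs_self _
      _ ≤ α * r ^ k * α := h2
      _ = α * α * r ^ k := by ring
  have hswap : (∑' k : ℕ, ∫ t in Set.Ioc (0:ℝ) α, F k t) =
      ∫ t in Set.Ioc (0:ℝ) α, ∑' k : ℕ, F k t :=
    integral_tsum_of_summable_integral_norm hFint hint_norm
  -- pointwise sum of the geometric series
  have hpt : ∀ t ∈ Set.Ioc (0:ℝ) α, (∑' k : ℕ, F k t) =
      (α - t) / ((1 - x) * Real.exp t + x) := by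
    intro t ht
    have hqlt : ‖x * (1 - Real.exp (-t))‖ < 1 := lt_of_le_of_lt (hq t ht) hr1
    have hgeom : (∑' k : ℕ, (x * (1 - Real.exp (-t))) ^ k) =
        (1 - x * (1 - Real.exp (-t)))⁻¹ := tsum_geometric_of_norm_lt_one hqlt
    simp only [hF_def]
    rw [tsum_mul_left, hgeom]
    have hden : (1 - x) * Real.exp t + x = Real.exp t * (1 - x * (1 - Real.exp (-t))) := by
      rw [Real.exp_neg]
      field_simp
      ring
    have hne : 1 - x * (1 - Real.exp (-t)) ≠ 0 := by
      intro h
      rw [sub_eq_zero] at h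
      have := hqlt
      rw [← h] at this
      simp at this
    rw [hden, Real.exp_neg]
    field_simp
  have hint_congr : (∫ t in Set.Ioc (0:ℝ) α, ∑' k : ℕ, F k t) =
      ∫ t in Set.Ioc (0:ℝ) α, (α - t) / ((1 - x) * Real.exp t + x) :=
    setIntegral_congr_fun measurableSet_Ioc hpt
  calc (∑' k : ℕ, p (k + 1) * x ^ (k + 1))
      = ∑' k : ℕ, x * α⁻¹ * ∫ t in Set.Ioc (0:ℝ) α, F k t := by
        apply tsum_congr; intro k
        rw [hterm k, intervalIntegral.integral_of_le hα0.le]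
    _ = x * α⁻¹ * ∑' k : ℕ, ∫ t in Set.Ioc (0:ℝ) α, F k t := tsum_mul_left
    _ = x / α * ∫ t in (0:ℝ)..α, (α - t) / ((1 - x) * Real.exp t + x) := by
        rw [hswap, hint_congr, div_eq_mul_inv, intervalIntegral.integral_of_le hα0.le]
end

section
/- Let (X_n) be a sequence of stochastic processes on [0,∞) such that each X_n(·,ω) is nondecreasing in t, and let f : [0,∞) → ℝ be continuous. If X_n(t) → f(t) in probability for every t ≥ 0, then sup_{0 ≤ t ≤ u} |X_n(t) - f(t)| → 0 in probability for every u > 0. -/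
open MeasureTheory Filter

/-- If `X_n(t)` are stochastic processes, each increasing in `t`, converging in
probability to a continuous deterministic function `f(t)` for each fixed `t ≥ 0`,
then the convergence is uniform on compacts in probability. -/
theorem stmt_15 {Ω : Type*} [MeasurableSpace Ω] (μ : Measure Ω) [IsProbabilityMeasure μ]
    (X : ℕ → ℝ → Ω → ℝ) (f : ℝ → ℝ)
    (hmono : ∀ n ω, ∀ s t : ℝ, s ≤ t → X n s ω ≤ X n t ω)
    (hf : Continuous f)
    (hconv : ∀ t : ℝ, 0 ≤ t →
      TendstoInMeasure μ (fun n ω => X n t ω) atTop (fun _ => f t)) :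
    ∀ u : ℝ, 0 < u → ∀ ε : ℝ, 0 < ε →
      Tendsto (fun n => μ {ω | ε ≤ ⨆ t : Set.Icc (0:ℝ) u, |X n (t : ℝ) ω - f t|})
        atTop (nhds 0) := by
  intro u hu ε hε
  -- uniform continuity of f on [0, u]
  have hUC : UniformContinuousOn f (Set.Icc 0 u) :=
    isCompact_Icc.uniformContinuousOn_of_continuous hf.continuousOn
  rw [Metric.uniformContinuousOn_iff] at hUC
  obtain ⟨δ, hδ, hδ'⟩ := hUC (ε/3) (by linarith)
  obtain ⟨N, hN⟩ := exists_nat_gt (u/δ)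
  have hN0 : 0 < (N:ℝ) := lt_of_le_of_lt (div_nonneg hu.le hδ.le) hN
  have hNn : 0 < N := by exact_mod_cast hN0
  have huN : u / N < δ := by
    rw [div_lt_iff₀ hN0]
    rw [div_lt_iff₀ hδ] at hN
    linarith
  set p : ℕ → ℝ := fun i => i * u / N with hp
  have hpmem : ∀ j : ℕ, j ≤ N → p j ∈ Set.Icc (0:ℝ) u := by
    intro j hj
    constructor
    · positivity
    · rw [div_le_iff₀ hN0]
      have : (j:ℝ) ≤ N := by exact_mod_cast hj
      nlinarith
  have hpsucc : ∀ j : ℕ, p (j+1) - p j = u / N := by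
    intro j
    simp only [hp]
    push_cast
    ring
  -- key pointwise estimate
  have key : ∀ n ω, (∀ i ∈ Finset.range (N+1), |X n (p i) ω - f (p i)| < ε/3) →
      (⨆ t : Set.Icc (0:ℝ) u, |X n (t:ℝ) ω - f t|) < ε := by
    intro n ω h
    haveI : Nonempty (Set.Icc (0:ℝ) u) := ⟨⟨0, by constructor <;> [rfl; exact hu.le]⟩⟩
    have hsup : (⨆ t : Set.Icc (0:ℝ) u, |X n (t:ℝ) ω - f t|) ≤ 2*ε/3 := by
      apply ciSup_le
      rintro ⟨t, ht0, htu⟩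
      set i : ℕ := min ⌊t * N / u⌋₊ (N-1) with hi
      have hiN : i ≤ N - 1 := min_le_right _ _
      have hiN' : i + 1 ≤ N := by omega
      have hiNlt : i < N + 1 := by omega
      have htNu : 0 ≤ t * N / u := by positivity
      have hpi_le : p i ≤ t := by
        have h1 : (i:ℝ) ≤ t * N / u := by
          calc (i:ℝ) ≤ (⌊t * N / u⌋₊ : ℝ) := by
                exact_mod_cast min_le_left ⌊t * N / u⌋₊ (N-1)
            _ ≤ t * N / u := Nat.floor_le htNu
        rw [le_div_iff₀ hu] at h1
        simp only [hp]
        rw [div_le_iff₀ hN0]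
        linarith
      have hle_pi1 : t ≤ p (i+1) := by
        by_cases hcase : ⌊t * N / u⌋₊ ≤ N - 1
        · have hieq : i = ⌊t * N / u⌋₊ := by omega
          have h2 : t * N / u < (i:ℝ) + 1 := by
            rw [hieq]
            exact_mod_cast Nat.lt_floor_add_one (t * N / u)
          rw [div_lt_iff₀ hu] at h2
          simp only [hp]
          rw [le_div_iff₀ hN0]
          push_cast
          nlinarith
        · have hieq : i = N - 1 := by omega
          have : i + 1 = N := by omega
          rw [this]
          simp only [hp]
          rw [le_div_iff₀ hN0]
          nlinarith
      have hd1 : dist t (p i) < δ := by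
        rw [Real.dist_eq, abs_of_nonneg (by linarith)]
        have := hpsucc i
        linarith
      have hd2 : dist t (p (i+1)) < δ := by
        rw [Real.dist_eq, abs_of_nonpos (by linarith)]
        have := hpsucc i
        linarith
      have htmem : t ∈ Set.Icc (0:ℝ) u := ⟨ht0, htu⟩
      have hf1 : |f t - f (p i)| < ε/3 := by
        have := hδ' t htmem (p i) (hpmem i (by omega)) hd1
        rwa [Real.dist_eq] at this
      have hf2 : |f t - f (p (i+1))| < ε/3 := by
        have := hδ' t htmem (p (i+1)) (hpmem (i+1) hiN') hd2
        rwa [Real.dist_eq] at this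
      have hb1 := h i (Finset.mem_range.2 hiNlt)
      have hb2 := h (i+1) (Finset.mem_range.2 (by omega))
      have hm1 := hmono n ω (p i) t hpi_le
      have hm2 := hmono n ω t (p (i+1)) hle_pi1
      rw [abs_lt] at hb1 hb2 hf1 hf2
      rw [abs_le]
      constructor <;> [linarith [hb1.1, hf1.2]; linarith [hb2.2, hf2.1]]
    linarith
  -- set inclusion
  have hsub : ∀ n, {ω | ε ≤ ⨆ t : Set.Icc (0:ℝ) u, |X n (t:ℝ) ω - f t|} ⊆
      ⋃ i ∈ Finset.range (N+1), {ω | ε/3 ≤ dist (X n (p i) ω) (f (p i))} := by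
    intro n ω hω
    by_contra hc
    simp only [Set.mem_iUnion, not_exists, Set.mem_setOf_eq, not_le] at hc
    have : (⨆ t : Set.Icc (0:ℝ) u, |X n (t:ℝ) ω - f t|) < ε := by
      apply key n ω
      intro i hi
      have := hc i hi
      rwa [Real.dist_eq] at this
    exact absurd hω (not_le.2 this)
  have hbound : ∀ n, μ {ω | ε ≤ ⨆ t : Set.Icc (0:ℝ) u, |X n (t:ℝ) ω - f t|} ≤
      ∑ i ∈ Finset.range (N+1), μ {ω | ε/3 ≤ dist (X n (p i) ω) (f (p i))} :=
    fun n => le_trans (measure_mono (hsub n)) (measure_biUnion_finset_le _ _)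
  have hlim : Tendsto (fun n => ∑ i ∈ Finset.range (N+1),
      μ {ω | ε/3 ≤ dist (X n (p i) ω) (f (p i))}) atTop (nhds 0) := by
    have hsum := tendsto_finset_sum (Finset.range (N+1))
      (fun i (_ : i ∈ Finset.range (N+1)) =>
        (tendstoInMeasure_iff_dist.1 (hconv (p i) (hpmem i (Nat.lt_succ_iff.1 (Finset.mem_range.1 ‹i ∈ Finset.range (N+1)›))).1))
          (ε/3) (by linarith))
    simpa using hsum
  exact tendsto_of_tendsto_of_tendsto_of_le_of_le tendsto_const_nhds hlim
    (fun n => zero_le) hbound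
end

section
/- Let X_n ≥ 0 and Z ≥ 0 be random variables and Y_n random elements (X_n, Y_n on the same space) such that for every real x, P(X_n ≤ x | Y_n) → P(Z ≤ x) in probability as n → ∞, and E[X_n] → E[Z] < ∞. Then E[X_n | Y_n] → E[Z] in probability. -/
open MeasureTheory Filter

namespace Stmt16Aux

variable {Ω : Type*} {mΩ : MeasurableSpace Ω} {μ : Measure Ω}

lemma tim_const (g : Ω → ℝ) : TendstoInMeasure μ (fun _ : ℕ => g) atTop g := by
  rw [tendstoInMeasure_iff_dist]
  intro ε hε
  have h0 : ∀ n : ℕ, μ {ω | ε ≤ dist (g ω) (g ω)} = 0 := by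
    intro n
    have : {ω | ε ≤ dist (g ω) (g ω)} = ∅ := by
      ext ω; simp only [Set.mem_setOf_eq, dist_self, Set.mem_empty_iff_false, iff_false, not_le]
      exact hε
    rw [this, measure_empty]
  have h1 : (fun n : ℕ => μ {ω | ε ≤ dist (g ω) (g ω)}) = fun _ => 0 := funext h0
  rw [h1]
  exact tendsto_const_nhds

lemma tim_add {f f' : ℕ → Ω → ℝ} {g g' : Ω → ℝ}
    (hf : TendstoInMeasure μ f atTop g) (hf' : TendstoInMeasure μ f' atTop g') :
    TendstoInMeasure μ (fun n ω => f n ω + f' n ω) atTop (fun ω => g ω + g' ω) := by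
  rw [tendstoInMeasure_iff_dist]
  intro ε hε
  have hle : ∀ n, μ {ω | ε ≤ dist (f n ω + f' n ω) (g ω + g' ω)} ≤
      μ {ω | ε/2 ≤ dist (f n ω) (g ω)} + μ {ω | ε/2 ≤ dist (f' n ω) (g' ω)} := by
    intro n
    refine le_trans (measure_mono ?_) (measure_union_le _ _)
    intro ω hω
    simp only [Set.mem_setOf_eq] at hω
    by_contra hc
    simp only [Set.mem_union, Set.mem_setOf_eq, not_or, not_le] at hc
    have := dist_add_add_le (f n ω) (f' n ω) (g ω) (g' ω)
    linarith [hc.1, hc.2]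
  have hup : Tendsto (fun n => μ {ω | ε/2 ≤ dist (f n ω) (g ω)} +
      μ {ω | ε/2 ≤ dist (f' n ω) (g' ω)}) atTop (nhds 0) := by
    have := (tendstoInMeasure_iff_dist.mp hf (ε/2) (by linarith)).add (tendstoInMeasure_iff_dist.mp hf' (ε/2) (by linarith))
    simpa using this
  exact tendsto_of_tendsto_of_tendsto_of_le_of_le tendsto_const_nhds hup
    (fun n => zero_le) hle

lemma tim_affine (p q : ℝ) {f : ℕ → Ω → ℝ} {g : Ω → ℝ}
    (hf : TendstoInMeasure μ f atTop g) :
    TendstoInMeasure μ (fun n ω => p * f n ω + q) atTop (fun ω => p * g ω + q) := by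
  rcases eq_or_ne p 0 with rfl | hp
  · simpa using tim_const (μ := μ) (fun _ => q)
  · rw [tendstoInMeasure_iff_dist]
    intro ε hε
    have hset : ∀ n, {ω | ε ≤ dist (p * f n ω + q) (p * g ω + q)} =
        {ω | ε / |p| ≤ dist (f n ω) (g ω)} := by
      intro n; ext ω
      simp only [Set.mem_setOf_eq, Real.dist_eq]
      have h1 : p * f n ω + q - (p * g ω + q) = p * (f n ω - g ω) := by ring
      rw [h1, abs_mul, div_le_iff₀' (abs_pos.mpr hp)]
    simp_rw [hset]
    exact tendstoInMeasure_iff_dist.mp hf _ (by positivity)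

lemma tim_sum {ι : Type*} (s : Finset ι) {f : ι → ℕ → Ω → ℝ} {g : ι → Ω → ℝ}
    (h : ∀ i ∈ s, TendstoInMeasure μ (f i) atTop (g i)) :
    TendstoInMeasure μ (fun n ω => ∑ i ∈ s, f i n ω) atTop (fun ω => ∑ i ∈ s, g i ω) := by
  classical
  induction s using Finset.induction_on with
  | empty => simpa using tim_const (μ := μ) (fun _ => (0:ℝ))
  | @insert a s ha ih =>
    simp_rw [Finset.sum_insert ha]
    exact tim_add (h a (Finset.mem_insert_self a s))
      (ih fun i hi => h i (Finset.mem_insert_of_mem hi))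

/-- the step lower approximation -/
noncomputable def LF (h : ℝ) (K : ℕ) (x : ℝ) : ℝ :=
  ∑ i ∈ Finset.Icc 1 K, h * (1 - if x ≤ (i:ℝ) * h then 1 else 0)

lemma LF_nonneg {h : ℝ} (hh : 0 ≤ h) (K : ℕ) (x : ℝ) : 0 ≤ LF h K x := by
  refine Finset.sum_nonneg fun i _ => ?_
  have : (if x ≤ (i:ℝ) * h then (1:ℝ) else 0) ≤ 1 := by split_ifs <;> norm_num
  nlinarith

lemma LF_eq_of_lt {h x : ℝ} (hh : 0 ≤ h) {K : ℕ} (hx : (K:ℝ) * h < x) :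
    LF h K x = (K:ℝ) * h := by
  unfold LF
  have hc : ∀ i ∈ Finset.Icc 1 K, h * (1 - if x ≤ (i:ℝ) * h then 1 else 0) = h := by
    intro i hi
    rw [if_neg, sub_zero, mul_one]
    push_neg
    have hiK : (i:ℝ) ≤ K := by exact_mod_cast (Finset.mem_Icc.mp hi).2
    nlinarith
  rw [Finset.sum_congr rfl hc, Finset.sum_const, Nat.card_Icc]
  simp [nsmul_eq_mul, mul_comm]

lemma LF_succ (h : ℝ) (K : ℕ) (x : ℝ) :
    LF h (K+1) x = LF h K x + h * (1 - if x ≤ ((K:ℝ)+1) * h then 1 else 0) := by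
  unfold LF
  rw [Finset.sum_Icc_succ_top (by omega : 1 ≤ K + 1)]
  push_cast
  rfl

lemma LF_le {h x : ℝ} (hh : 0 < h) (hx : 0 ≤ x) (K : ℕ) :
    LF h K x ≤ min x ((K:ℝ) * h) := by
  induction K with
  | zero => simp [LF, min_eq_right hx]
  | succ K ih =>
    rw [LF_succ]
    have hKK : (K:ℝ) * h ≤ ((K:ℝ)+1) * h := by nlinarith
    by_cases hc : x ≤ ((K:ℝ)+1) * h
    · rw [if_pos hc]
      have : min x ((K:ℝ)*h) ≤ min x (((K:ℝ)+1)*h) := min_le_min le_rfl hKK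
      push_cast
      simpa using le_trans ih this
    · push_neg at hc
      rw [if_neg (not_le.mpr hc)]
      have hKx : (K:ℝ) * h < x := lt_of_le_of_lt hKK hc
      rw [LF_eq_of_lt hh.le hKx]
      have : min x (((K:ℝ)+1)*h) = ((K:ℝ)+1)*h := min_eq_right hc.le
      push_cast
      rw [this]; nlinarith

lemma le_LF {h x : ℝ} (hh : 0 < h) (hx : 0 ≤ x) (K : ℕ) :
    min x ((K:ℝ) * h) - h ≤ LF h K x := by
  induction K with
  | zero => simp [LF, min_eq_right hx]; linarith
  | succ K ih =>
    rw [LF_succ]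
    have hKK : (K:ℝ) * h ≤ ((K:ℝ)+1) * h := by nlinarith
    by_cases hc : x ≤ ((K:ℝ)+1) * h
    · rw [if_pos hc]
      have hmin : min x (((K:ℝ)+1)*h) = x := min_eq_left hc
      push_cast
      rw [hmin]
      by_cases hc2 : x ≤ (K:ℝ) * h
      · have : min x ((K:ℝ)*h) = x := min_eq_left hc2
        rw [this] at ih; linarith
      · push_neg at hc2
        rw [LF_eq_of_lt hh.le hc2]
        linarith
    · push_neg at hc
      rw [if_neg (not_le.mpr hc)]
      have hKx : (K:ℝ) * h < x := lt_of_le_of_lt hKK hc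
      rw [LF_eq_of_lt hh.le hKx]
      have : min x (((K:ℝ)+1)*h) = ((K:ℝ)+1)*h := min_eq_right hc.le
      push_cast
      rw [this]; nlinarith

end Stmt16Aux

set_option maxHeartbeats 2000000 in
open Stmt16Aux in
/-- If `X_n ≥ 0`, `Z ≥ 0`, the conditional distribution functions of `X_n` given
`Y_n` (i.e. given sub-σ-algebras `m n`) converge in probability to that of `Z`,
and `E[X_n] → E[Z]`, then `E[X_n | Y_n] → E[Z]` in probability. -/
theorem stmt_16 {Ω : Type*} [inst : MeasurableSpace Ω] (μ : Measure Ω)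
    [IsProbabilityMeasure μ]
    {Ω' : Type*} [MeasurableSpace Ω'] (ν : Measure Ω') [IsProbabilityMeasure ν]
    (X : ℕ → Ω → ℝ) (Z : Ω' → ℝ)
    (m : ℕ → MeasurableSpace Ω) (hm : ∀ n, m n ≤ inst)
    (hX : ∀ n, 0 ≤ X n) (hZ : 0 ≤ Z)
    (hXint : ∀ n, Integrable (X n) μ) (hZint : Integrable Z ν)
    (hcdf : ∀ x : ℝ,
      TendstoInMeasure μ
        (fun n => μ[Set.indicator {ω | X n ω ≤ x} (fun _ => (1:ℝ)) | m n])
        atTop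
        (fun _ => (ν {ω' | Z ω' ≤ x}).toReal))
    (hmean : Tendsto (fun n => ∫ ω, X n ω ∂μ) atTop (nhds (∫ ω', Z ω' ∂ν))) :
    TendstoInMeasure μ (fun n => μ[X n | m n]) atTop
      (fun _ => ∫ ω', Z ω' ∂ν) := by
  classical
  set I : ℝ := ∫ ω', Z ω' ∂ν with hIdef
  rw [tendstoInMeasure_iff_dist]
  intro δ hδ
  rw [ENNReal.tendsto_nhds_zero]
  intro ε hε
  obtain ⟨ε', hε'pos, hε'le⟩ : ∃ ε' : ℝ, 0 < ε' ∧ ENNReal.ofReal ε' ≤ ε := by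
    rcases eq_or_ne ε ⊤ with rfl | hne
    · exact ⟨1, one_pos, le_top⟩
    · exact ⟨ε.toReal, ENNReal.toReal_pos hε.ne' hne, by rw [ENNReal.ofReal_toReal hne]⟩
  set h0 : ℝ := min (δ/8) (ε' * δ / 64) with hh0def
  have hh0 : 0 < h0 := lt_min (by linarith) (by positivity)
  have hh0δ : h0 ≤ δ/8 := min_le_left _ _
  have hh0ε : h0 ≤ ε' * δ / 64 := min_le_right _ _
  -- measurable version of Z
  have hZm := hZint.aestronglyMeasurable
  set Z' : Ω' → ℝ := hZm.mk Z with hZ'def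
  have hZZ' : Z =ᵐ[ν] Z' := hZm.ae_eq_mk
  have hZ'sm : StronglyMeasurable Z' := hZm.stronglyMeasurable_mk
  have hZ'int : Integrable Z' ν := hZint.congr hZZ'
  have hZ'nn : 0 ≤ᵐ[ν] Z' := by
    filter_upwards [hZZ'] with ω' h
    rw [Pi.zero_apply, ← h]; exact hZ ω'
  have hI' : I = ∫ ω', Z' ω' ∂ν := integral_congr_ae hZZ'
  -- choose the truncation level K
  have hminTend : Tendsto (fun K : ℕ => ∫ ω', min (Z' ω') ((K:ℝ) * h0) ∂ν) atTop (nhds I) := by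
    rw [hI']
    refine tendsto_integral_of_dominated_convergence (fun ω' => |Z' ω'|) ?_ hZ'int.abs ?_ ?_
    · intro K
      exact (hZ'sm.measurable.min measurable_const).aestronglyMeasurable
    · intro K
      filter_upwards [hZ'nn] with ω' hω'
      have h1 : 0 ≤ min (Z' ω') ((K:ℝ)*h0) := le_min hω' (by positivity)
      rw [Real.norm_eq_abs, abs_of_nonneg h1]
      exact le_trans (min_le_left _ _) (le_abs_self _)
    · refine Filter.Eventually.of_forall (fun ω' => ?_)
      have hKt : Tendsto (fun K : ℕ => (K:ℝ) * h0) atTop atTop :=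
        tendsto_natCast_atTop_atTop.atTop_mul_const hh0
      exact tendsto_const_nhds.congr'
        ((hKt.eventually_ge_atTop (Z' ω')).mono fun K hK' => (min_eq_left hK').symm)
  obtain ⟨K, hK⟩ : ∃ K : ℕ, I - h0 ≤ ∫ ω', min (Z' ω') ((K:ℝ) * h0) ∂ν :=
    (hminTend.eventually (eventually_ge_nhds (by linarith : I - h0 < I))).exists
  -- the limit constants
  set ci : ℕ → ℝ := fun i => (ν {ω' | Z ω' ≤ (i:ℝ) * h0}).toReal with hcidef
  set c : ℝ := ∑ i ∈ Finset.Icc 1 K, h0 * (1 - ci i) with hcdef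
  have hmeasZ' : ∀ i : ℕ, MeasurableSet {ω' | Z' ω' ≤ (i:ℝ)*h0} := fun i =>
    measurableSet_le hZ'sm.measurable measurable_const
  have hciZ' : ∀ i : ℕ, ci i = (ν {ω' | Z' ω' ≤ (i:ℝ)*h0}).toReal := by
    intro i
    simp only [hcidef]
    congr 1
    apply measure_congr
    filter_upwards [hZZ'] with ω' h
    change (Z ω' ≤ _) = (Z' ω' ≤ _)
    rw [h]
  have hiteint : ∀ i : ℕ,
      Integrable (fun ω' => if Z' ω' ≤ (i:ℝ)*h0 then (1:ℝ) else 0) ν := by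
    intro i
    have he : (fun ω' => if Z' ω' ≤ (i:ℝ)*h0 then (1:ℝ) else 0) =
        Set.indicator {ω' | Z' ω' ≤ (i:ℝ)*h0} (fun _ => 1) := by
      funext ω'; rw [Set.indicator_apply]; rfl
    rw [he]
    exact (integrable_const 1).indicator (hmeasZ' i)
  have hite_integral : ∀ i : ℕ,
      ∫ ω', (if Z' ω' ≤ (i:ℝ)*h0 then (1:ℝ) else 0) ∂ν = ci i := by
    intro i
    have he : (fun ω' => if Z' ω' ≤ (i:ℝ)*h0 then (1:ℝ) else 0) =
        Set.indicator {ω' | Z' ω' ≤ (i:ℝ)*h0} (fun _ => 1) := by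
      funext ω'; rw [Set.indicator_apply]; rfl
    rw [he, integral_indicator_const _ (hmeasZ' i), hciZ' i, smul_eq_mul, mul_one, measureReal_def]
  have hindintZ : ∀ i : ℕ, Integrable
      (fun ω' => h0 * (1 - if Z' ω' ≤ (i:ℝ)*h0 then (1:ℝ) else 0)) ν := fun i =>
    ((integrable_const (1:ℝ)).sub (hiteint i)).const_mul h0
  have hLFint : Integrable (fun ω' => LF h0 K (Z' ω')) ν := by
    have := integrable_finset_sum (μ := ν) (Finset.Icc 1 K) (fun i _ => hindintZ i)
    exact this
  have hc_eq : ∫ ω', LF h0 K (Z' ω') ∂ν = c := by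
    unfold LF
    rw [integral_finset_sum _ (fun i _ => hindintZ i)]
    simp only [hcdef]
    refine Finset.sum_congr rfl (fun i _ => ?_)
    rw [integral_const_mul]
    congr 1
    rw [integral_sub (integrable_const 1) (hiteint i), hite_integral i,
      integral_const]
    simp
  have hcleI : c ≤ I := by
    rw [← hc_eq, hI']
    refine integral_mono_ae hLFint hZ'int ?_
    filter_upwards [hZ'nn] with ω' hω'
    exact le_trans (LF_le hh0 hω' K) (min_le_left _ _)
  have hminint : Integrable (fun ω' => min (Z' ω') ((K:ℝ)*h0)) ν := by
    have := hZ'int.inf (integrable_const ((K:ℝ)*h0))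
    exact this.congr (Filter.Eventually.of_forall fun ω' => rfl)
  have hcge : I - 2*h0 ≤ c := by
    rw [← hc_eq]
    have h1 : ∫ ω', (min (Z' ω') ((K:ℝ)*h0) - h0) ∂ν ≤ ∫ ω', LF h0 K (Z' ω') ∂ν := by
      refine integral_mono_ae (hminint.sub (integrable_const h0)) hLFint ?_
      filter_upwards [hZ'nn] with ω' hω'
      have := le_LF hh0 hω' K
      linarith
    have h2 : ∫ ω', (min (Z' ω') ((K:ℝ)*h0) - h0) ∂ν
        = (∫ ω', min (Z' ω') ((K:ℝ)*h0) ∂ν) - h0 := by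
      rw [integral_sub hminint (integrable_const h0), integral_const]
      simp
    rw [h2] at h1
    linarith
  -- the μ-side objects
  set f : ℕ → ℕ → Ω → ℝ := fun i n =>
    μ[Set.indicator {ω | X n ω ≤ (i:ℝ)*h0} (fun _ => (1:ℝ)) | m n] with hfdef
  set S : ℕ → Ω → ℝ := fun n ω => ∑ i ∈ Finset.Icc 1 K, h0 * (1 - f i n ω) with hSdef
  have hindXint : ∀ n i, Integrable
      (Set.indicator {ω | X n ω ≤ (i:ℝ)*h0} (fun _ => (1:ℝ))) μ := by
    intro n i
    have hXm := (hXint n).aestronglyMeasurable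
    have hXX' : X n =ᵐ[μ] hXm.mk (X n) := hXm.ae_eq_mk
    have hmk : MeasurableSet {ω | hXm.mk (X n) ω ≤ (i:ℝ)*h0} :=
      measurableSet_le hXm.stronglyMeasurable_mk.measurable measurable_const
    refine ((integrable_const (1:ℝ)).indicator hmk).congr ?_
    filter_upwards [hXX'] with ω h
    simp [Set.indicator_apply, Set.mem_setOf_eq, h]
  have hterm_int : ∀ n i, Integrable
      (fun ω => h0 * (1 - Set.indicator {ω | X n ω ≤ (i:ℝ)*h0} (fun _ => (1:ℝ)) ω)) μ :=
    fun n i => ((integrable_const 1).sub (hindXint n i)).const_mul h0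
  have hSint : ∀ n, Integrable (S n) μ := by
    intro n
    have := integrable_finset_sum (μ := μ) (Finset.Icc 1 K)
      (fun i (_ : i ∈ Finset.Icc 1 K) =>
        (((integrable_const (1:ℝ)).sub (integrable_condExp (f := Set.indicator {ω | X n ω ≤ (i:ℝ)*h0} (fun _ => (1:ℝ))) (m := m n))).const_mul h0))
    exact this
  -- S n is a.e. equal to the conditional expectation of the step function
  have hSL : ∀ n, S n =ᵐ[μ] μ[fun ω => ∑ i ∈ Finset.Icc 1 K,
      h0 * (1 - Set.indicator {ω | X n ω ≤ (i:ℝ)*h0} (fun _ => (1:ℝ)) ω) | m n] := by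
    intro n
    have h1 : μ[fun ω => ∑ i ∈ Finset.Icc 1 K,
        h0 * (1 - Set.indicator {ω | X n ω ≤ (i:ℝ)*h0} (fun _ => (1:ℝ)) ω) | m n]
        =ᵐ[μ] ∑ i ∈ Finset.Icc 1 K,
          μ[fun ω => h0 * (1 - Set.indicator {ω | X n ω ≤ (i:ℝ)*h0} (fun _ => (1:ℝ)) ω) | m n] := by
      have he : (fun ω => ∑ i ∈ Finset.Icc 1 K,
          h0 * (1 - Set.indicator {ω | X n ω ≤ (i:ℝ)*h0} (fun _ => (1:ℝ)) ω))
          = ∑ i ∈ Finset.Icc 1 K,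
            (fun ω => h0 * (1 - Set.indicator {ω | X n ω ≤ (i:ℝ)*h0} (fun _ => (1:ℝ)) ω)) := by
        funext ω; simp [Finset.sum_apply]
      rw [he]
      exact condExp_finsetSum (fun (i : ℕ) _ => hterm_int n i) (m n)
    have h2 : ∀ i ∈ Finset.Icc 1 K,
        μ[fun ω => h0 * (1 - Set.indicator {ω | X n ω ≤ (i:ℝ)*h0} (fun _ => (1:ℝ)) ω) | m n]
        =ᵐ[μ] fun ω => h0 * (1 - f i n ω) := by
      intro i _
      have hsub : μ[(fun _ => (1:ℝ)) - Set.indicator {ω | X n ω ≤ (i:ℝ)*h0} (fun _ => (1:ℝ)) | m n]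
          =ᵐ[μ] (fun _ => (1:ℝ)) - f i n := by
        refine (condExp_sub (integrable_const 1) (hindXint n i) (m n)).trans ?_
        rw [condExp_const (hm n)]
      have hsmul := condExp_smul (μ := μ) (m := m n) h0
        ((fun _ => (1:ℝ)) - Set.indicator {ω | X n ω ≤ (i:ℝ)*h0} (fun _ => (1:ℝ)))
      have he : (fun ω => h0 * (1 - Set.indicator {ω | X n ω ≤ (i:ℝ)*h0} (fun _ => (1:ℝ)) ω))
          = h0 • ((fun _ => (1:ℝ)) - Set.indicator {ω | X n ω ≤ (i:ℝ)*h0} (fun _ => (1:ℝ))) := by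
        funext ω; simp [Pi.smul_apply, Pi.sub_apply, smul_eq_mul]
      rw [he]
      refine hsmul.trans ?_
      filter_upwards [hsub] with ω h
      simp only [Pi.smul_apply, smul_eq_mul, h, Pi.sub_apply]
    refine ((h1.trans ?_)).symm
    have h3 : ∀ᵐ ω ∂μ, ∀ i ∈ Finset.Icc 1 K,
        (μ[fun ω => h0 * (1 - Set.indicator {ω | X n ω ≤ (i:ℝ)*h0} (fun _ => (1:ℝ)) ω) | m n]) ω
        = h0 * (1 - f i n ω) := by
      rw [Filter.eventually_all_finset]
      exact h2
    filter_upwards [h3] with ω hω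
    rw [Finset.sum_apply]
    exact Finset.sum_congr rfl (fun i hi => hω i hi)
  -- S n ≤ᵐ μ[X n | m n]
  have hDge : ∀ n, S n ≤ᵐ[μ] μ[X n | m n] := by
    intro n
    refine (hSL n).trans_le ?_
    refine condExp_mono (integrable_finset_sum _ (fun i _ => hterm_int n i)) (hXint n) ?_
    refine Filter.Eventually.of_forall (fun ω => ?_)
    have he : (∑ i ∈ Finset.Icc 1 K,
        h0 * (1 - Set.indicator {ω | X n ω ≤ (i:ℝ)*h0} (fun _ => (1:ℝ)) ω))
        = LF h0 K (X n ω) := by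
      unfold LF
      exact Finset.sum_congr rfl (fun i _ => by
        simp [Set.indicator_apply, Set.mem_setOf_eq])
    calc (∑ i ∈ Finset.Icc 1 K,
        h0 * (1 - Set.indicator {ω | X n ω ≤ (i:ℝ)*h0} (fun _ => (1:ℝ)) ω))
        = LF h0 K (X n ω) := he
      _ ≤ min (X n ω) ((K:ℝ)*h0) := LF_le hh0 (hX n ω) K
      _ ≤ X n ω := min_le_left _ _
  have hDnn : ∀ n, 0 ≤ᵐ[μ] fun ω => (μ[X n | m n]) ω - S n ω := by
    intro n
    filter_upwards [hDge n] with ω hω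
    simp only [Pi.zero_apply]
    linarith
  -- convergence in measure of S to c
  have hStim : TendstoInMeasure μ (fun n => S n) atTop (fun _ => c) := by
    have h1 : ∀ i ∈ Finset.Icc 1 K, TendstoInMeasure μ
        (fun n ω => h0 * (1 - f i n ω)) atTop (fun _ => h0 * (1 - ci i)) := by
      intro i _
      have h2 := tim_affine (μ := μ) (-h0) h0 (hcdf ((i:ℝ)*h0))
      refine TendstoInMeasure.congr (fun n => Filter.Eventually.of_forall fun ω => by ring)
        (Filter.Eventually.of_forall fun ω => by ring) h2
    exact tim_sum (Finset.Icc 1 K) h1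
  -- a.e. bounds on S
  have hSbd : ∀ n, ∀ᵐ ω ∂μ, 0 ≤ S n ω ∧ S n ω ≤ (K:ℝ)*h0 := by
    intro n
    have h4 : ∀ᵐ ω ∂μ, ∀ i ∈ Finset.Icc 1 K, 0 ≤ f i n ω ∧ f i n ω ≤ 1 := by
      rw [Filter.eventually_all_finset]
      intro i _
      have h1 : 0 ≤ᵐ[μ] f i n := condExp_nonneg
        (Filter.Eventually.of_forall fun ω => Set.indicator_nonneg (fun _ _ => zero_le_one) _)
      have h2 : f i n ≤ᵐ[μ] fun _ => (1:ℝ) := by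
        have h3 := condExp_mono (μ := μ) (m := m n) (hindXint n i) (integrable_const (1:ℝ))
          (Filter.Eventually.of_forall fun ω =>
            Set.indicator_apply_le' (fun _ => le_rfl) (fun _ => zero_le_one))
        rwa [condExp_const (hm n)] at h3
      filter_upwards [h1, h2] with ω a b
      exact ⟨a, b⟩
    filter_upwards [h4] with ω hω
    constructor
    · refine Finset.sum_nonneg fun i hi => ?_
      have := hω i hi
      nlinarith [hh0.le]
    · calc S n ω ≤ ∑ i ∈ Finset.Icc 1 K, h0 :=
          Finset.sum_le_sum fun i hi => by have := hω i hi; nlinarith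
        _ = (K:ℝ)*h0 := by
          rw [Finset.sum_const, Nat.card_Icc]
          simp [nsmul_eq_mul, mul_comm]
  -- eventually the mean of S is close to c (bounded convergence)
  have hSint_ev : ∀ᶠ n in atTop, |(∫ ω, S n ω ∂μ) - c| ≤ h0 := by
    set B : ℝ := (K:ℝ)*h0 + |c| + 1 with hBdef
    have hB : 0 < B := by positivity
    have hmeasev := tendstoInMeasure_iff_dist.mp hStim (h0/2) (by linarith)
    have htoReal : Tendsto (fun n => (μ {ω | h0/2 ≤ dist (S n ω) c}).toReal) atTop (nhds 0) := by
      have h0' : (0:ENNReal) ≠ ⊤ := by simp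
      simpa [Function.comp_def] using (ENNReal.tendsto_toReal h0').comp hmeasev
    have hev2 : ∀ᶠ n in atTop, (μ {ω | h0/2 ≤ dist (S n ω) c}).toReal < h0/(2*B) :=
      htoReal.eventually_lt_const (by positivity)
    filter_upwards [hev2] with n hn
    set A := {ω | h0/2 ≤ dist (S n ω) c} with hAdef
    have hSm : Measurable (S n) := by
      refine Finset.measurable_sum _ (fun i _ => ?_)
      exact ((measurable_const.sub
        ((stronglyMeasurable_condExp (m := m n)).mono (hm n)).measurable).const_mul h0)
    have hAmeas : MeasurableSet A :=
      measurableSet_le measurable_const (hSm.dist measurable_const)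
    have hpt : ∀ᵐ ω ∂μ, |S n ω - c| ≤ h0/2 + Set.indicator A (fun _ => B) ω := by
      filter_upwards [hSbd n] with ω hωbd
      by_cases hω : ω ∈ A
      · rw [Set.indicator_of_mem hω]
        have habs : |S n ω - c| ≤ |S n ω| + |c| := by
          rw [sub_eq_add_neg]
          refine (abs_add_le _ _).trans ?_
          rw [abs_neg]
        have : |S n ω| ≤ (K:ℝ)*h0 := by
          rw [abs_of_nonneg hωbd.1]; exact hωbd.2
        have hh : 0 < h0/2 := by linarith
        calc |S n ω - c| ≤ (K:ℝ)*h0 + |c| := by linarith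
          _ ≤ h0/2 + B := by simp only [hBdef]; linarith
      · rw [Set.indicator_of_notMem hω, add_zero]
        have : ¬ (h0/2 ≤ dist (S n ω) c) := hω
        rw [Real.dist_eq] at this
        linarith [not_le.mp this]
    have hint1 : Integrable (fun ω => |S n ω - c|) μ := ((hSint n).sub (integrable_const c)).abs
    have hint2 : Integrable (fun ω => h0/2 + Set.indicator A (fun _ => B) ω) μ :=
      (integrable_const _).add ((integrable_const B).indicator hAmeas)
    have h5 : ∫ ω, |S n ω - c| ∂μ ≤ h0/2 + B * (μ A).toReal := by
      refine le_trans (integral_mono_ae hint1 hint2 hpt) ?_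
      rw [integral_add (integrable_const _) ((integrable_const B).indicator hAmeas),
        integral_const, integral_indicator_const _ hAmeas]
      simp [measure_univ, smul_eq_mul, mul_comm, measureReal_def]
    have h6 : |(∫ ω, S n ω ∂μ) - c| ≤ ∫ ω, |S n ω - c| ∂μ := by
      have he : (∫ ω, S n ω ∂μ) - c = ∫ ω, (S n ω - c) ∂μ := by
        rw [integral_sub (hSint n) (integrable_const c), integral_const]
        simp [measure_univ]
      rw [he]
      simpa [Real.norm_eq_abs] using norm_integral_le_integral_norm (fun ω => S n ω - c) (μ := μ)
    have h7 : B * (μ A).toReal ≤ h0/2 := by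
      have ht := le_of_lt hn
      have h71 : B * (μ A).toReal ≤ B * (h0/(2*B)) := mul_le_mul_of_nonneg_left ht hB.le
      have h72 : B * (h0/(2*B)) = h0/2 := by field_simp
      linarith
    linarith
  -- eventually the mean of X n is close to I
  have hXev : ∀ᶠ n in atTop, |(∫ ω, X n ω ∂μ) - I| < h0 := by
    have := Metric.tendsto_nhds.mp hmean h0 hh0
    simpa [Real.dist_eq] using this
  -- Markov bound for the "tail" part
  have hDev : ∀ᶠ n in atTop,
      μ {ω | δ/4 ≤ (μ[X n | m n]) ω - S n ω} ≤ ENNReal.ofReal (ε'/2) := by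
    filter_upwards [hSint_ev, hXev] with n hSn hXn
    have hDint : Integrable (fun ω => (μ[X n | m n]) ω - S n ω) μ :=
      integrable_condExp.sub (hSint n)
    have hDintegral : ∫ ω, ((μ[X n | m n]) ω - S n ω) ∂μ
        = (∫ ω, X n ω ∂μ) - ∫ ω, S n ω ∂μ := by
      rw [integral_sub integrable_condExp (hSint n), integral_condExp (hm n)]
    have hDsmall : ∫ ω, ((μ[X n | m n]) ω - S n ω) ∂μ ≤ 4*h0 := by
      rw [hDintegral]
      have h11 := abs_le.mp hSn
      have h12 := abs_lt.mp hXn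
      have h13 : ∫ ω, S n ω ∂μ ≥ c - h0 := by linarith [h11.1]
      linarith [h12.2, h11.1, hcge]
    have hmark := mul_meas_ge_le_integral_of_nonneg (hDnn n) hDint (δ/4)
    have htr : (μ {ω | δ/4 ≤ (μ[X n | m n]) ω - S n ω}).toReal ≤ ε'/2 := by
      have hδ4 : (0:ℝ) < δ/4 := by linarith
      have h15 : (δ/4) * (μ {ω | δ/4 ≤ (μ[X n | m n]) ω - S n ω}).toReal ≤ 4*h0 :=
        le_trans hmark hDsmall
      nlinarith [ENNReal.toReal_nonneg
        (a := μ {ω | δ/4 ≤ (μ[X n | m n]) ω - S n ω}), hε'pos, hδ]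
    calc μ {ω | δ/4 ≤ (μ[X n | m n]) ω - S n ω}
        = ENNReal.ofReal ((μ {ω | δ/4 ≤ (μ[X n | m n]) ω - S n ω}).toReal) :=
          (ENNReal.ofReal_toReal (measure_ne_top μ _)).symm
      _ ≤ ENNReal.ofReal (ε'/2) := ENNReal.ofReal_le_ofReal htr
  -- the S part
  have hSev : ∀ᶠ n in atTop, μ {ω | δ/2 ≤ dist (S n ω) c} ≤ ENNReal.ofReal (ε'/2) := by
    have := (tendstoInMeasure_iff_dist.mp hStim (δ/2) (by linarith)).eventually_lt_const
      (ENNReal.ofReal_pos.mpr (show (0:ℝ) < ε'/2 by linarith))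
    exact this.mono fun n hn => hn.le
  -- conclusion
  filter_upwards [hDev, hSev] with n h1 h2
  have hIc : |c - I| ≤ δ/4 := by
    rw [abs_of_nonpos (show c - I ≤ 0 by linarith)]
    linarith
  have hsub : {ω | δ ≤ dist ((μ[X n | m n]) ω) I} ≤ᵐ[μ]
      ({ω | δ/4 ≤ (μ[X n | m n]) ω - S n ω} ∪ {ω | δ/2 ≤ dist (S n ω) c} : Set Ω) := by
    filter_upwards [hDnn n] with ω hωD
    intro hmem
    have hmem' : δ ≤ dist ((μ[X n | m n]) ω) I := hmem
    by_contra hcon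
    have hA : ¬ (δ/4 ≤ (μ[X n | m n]) ω - S n ω) := fun h => hcon (Or.inl h)
    have hB : ¬ (δ/2 ≤ dist (S n ω) c) := fun h => hcon (Or.inr h)
    push_neg at hA hB
    have hd : dist ((μ[X n | m n]) ω) I
        ≤ ((μ[X n | m n]) ω - S n ω) + dist (S n ω) c + |c - I| := by
      rw [Real.dist_eq, Real.dist_eq]
      have e : (μ[X n | m n]) ω - I
          = ((μ[X n | m n]) ω - S n ω) + ((S n ω - c) + (c - I)) := by ring
      rw [e]
      have hωD' : (0:ℝ) ≤ (μ[X n | m n]) ω - S n ω := hωD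
      calc |((μ[X n | m n]) ω - S n ω) + ((S n ω - c) + (c - I))|
          ≤ |(μ[X n | m n]) ω - S n ω| + |(S n ω - c) + (c - I)| := abs_add_le _ _
        _ ≤ |(μ[X n | m n]) ω - S n ω| + (|S n ω - c| + |c - I|) :=
            add_le_add_right (abs_add_le _ _) _
        _ = ((μ[X n | m n]) ω - S n ω) + (|S n ω - c| + |c - I|) := by
            rw [abs_of_nonneg hωD']
        _ = ((μ[X n | m n]) ω - S n ω) + |S n ω - c| + |c - I| := by ring
    rw [Real.dist_eq] at hB
    rw [Real.dist_eq (S n ω) c] at hd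
    linarith [hmem']
  calc μ {ω | δ ≤ dist ((μ[X n | m n]) ω) I}
      ≤ μ ({ω | δ/4 ≤ (μ[X n | m n]) ω - S n ω} ∪ {ω | δ/2 ≤ dist (S n ω) c}) :=
        measure_mono_ae hsub
    _ ≤ μ {ω | δ/4 ≤ (μ[X n | m n]) ω - S n ω} + μ {ω | δ/2 ≤ dist (S n ω) c} :=
        measure_union_le _ _
    _ ≤ ENNReal.ofReal (ε'/2) + ENNReal.ofReal (ε'/2) := add_le_add h1 h2
    _ = ENNReal.ofReal ε' := by
        rw [← ENNReal.ofReal_add (by linarith) (by linarith)]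
        norm_num
    _ ≤ ε := hε'le
end
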